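/- arXiv:2405.03560 — 4 statements merged into one kernel-verified Lean document; each statement's English description precedes it below -/
import Mathlib

section
/- Let {f_i}_{i∈I} be well-posed. Suppose there exist α₁, α₂ ∈ K∞, ρ ∈ K, χ ∈ K∞ and V₁,…,V_m ∈ Lip₀(ℝⁿ,ℝ) such that for all i, j ∈ I and all x ∈ ℝⁿ: (a) α₁(‖x‖) ≤ V_i(x) ≤ α₂(‖x‖); (b) D⁺_{f_i}V_i(x) ≤ −ρ(V_i(x)); (c) V_i(x) ≤ χ(V_j(x)). For ε > 0 define Ψ_ε(t) := min_{s∈[0,t]} { ρ(s) + ε(t−s) }, and suppose that for some ε > 0 the quantity τ* := sup_{s>0} ∫_s^{χ(s)} dr/Ψ_ε(r) is finite. Then for every τ > τ* the switched system ẋ = f_{σ(t)}(x) is τ-UGB. -/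
noncomputable section

/-- A switching signal over the index set `I`: a piecewise-constant right-continuous
function `toFun : [０,∞) → I` together with its set of switching instants
(`0` is counted as a switching instant; the positive switching instants are exactly
the discontinuity points of the signal, and the set of instants is locally finite). -/
structure SwitchingSignal (I : Type*) where
  toFun : ℝ → I
  instants : Set ℝ
  zero_mem : (0 : ℝ) ∈ instants
  nonneg : ∀ t ∈ instants, (0 : ℝ) ≤ t
  finite_le : ∀ T : ℝ, (instants ∩ Set.Iic T).Finite
  const_between : ∀ s t : ℝ, 0 ≤ s → s ≤ t → instants ∩ Set.Ioc s t = ∅ → toFun s = toFun t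
  jump : ∀ t ∈ instants, 0 < t → ∀ s : ℝ, 0 ≤ s → s < t → instants ∩ Set.Ioo s t = ∅ →
    toFun s ≠ toFun t

/-- `Nsw σ s t` : the number of switching instants of `σ` in the interval `[s, t)`. -/
def Nsw {I : Type*} (σ : SwitchingSignal I) (s t : ℝ) : ℕ :=
  (σ.instants ∩ Set.Ico s t).ncard

/-- The class of `τ` dwell-time signals: any two consecutive switching instants
are at least `τ` apart. -/
def Sdw {I : Type*} (τ : ℝ) (σ : SwitchingSignal I) : Prop :=
  ∀ a b : ℝ, a ∈ σ.instants → b ∈ σ.instants → a < b →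
    σ.instants ∩ Set.Ioo a b = ∅ → τ ≤ b - a

/-- The class of `(τ, N₀)` average dwell-time signals. -/
def Sadw {I : Type*} (τ : ℝ) (N₀ : ℕ) (σ : SwitchingSignal I) : Prop :=
  ∀ s t : ℝ, 0 ≤ s → s ≤ t → (Nsw σ s t : ℝ) ≤ (N₀ : ℝ) + (t - s) / τ

/-- The class of `τ` average dwell-time signals (arbitrary chattering bound). -/
def SadwInf {I : Type*} (τ : ℝ) (σ : SwitchingSignal I) : Prop :=
  ∃ N₀ : ℕ, Sadw τ N₀ σ

/-- The class of eventually `τ`-average signals: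
`limsup_{t→∞} (N_σ(0,t) - t/τ) < +∞`. -/
def Sbar {I : Type*} (τ : ℝ) (σ : SwitchingSignal I) : Prop :=
  ∃ C : ℝ, ∀ᶠ t in Filter.atTop, (Nsw σ 0 t : ℝ) - t / τ ≤ C

/-- Class `K` comparison functions. -/
def IsClassK (α : ℝ → ℝ) : Prop :=
  ContinuousOn α (Set.Ici 0) ∧ α 0 = 0 ∧ StrictMonoOn α (Set.Ici 0)

/-- Class `K∞` comparison functions. -/
def IsClassKInf (α : ℝ → ℝ) : Prop :=
  IsClassK α ∧ ∀ M : ℝ, ∃ r : ℝ, 0 ≤ r ∧ M ≤ α r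

/-- Class `KL` comparison functions. -/
def IsClassKL (β : ℝ → ℝ → ℝ) : Prop :=
  ContinuousOn (fun p : ℝ × ℝ => β p.1 p.2) (Set.Ici 0 ×ˢ Set.Ici 0) ∧
  (∀ t : ℝ, 0 ≤ t → β 0 t = 0 ∧ StrictMonoOn (fun r => β r t) (Set.Ici 0)) ∧
  (∀ r : ℝ, 0 ≤ r → AntitoneOn (fun t => β r t) (Set.Ici 0) ∧
    Filter.Tendsto (fun t => β r t) Filter.atTop (nhds 0)) ∧
  (∀ r t : ℝ, 0 ≤ r → 0 ≤ t → 0 ≤ β r t)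

/-- A (Carathéodory, forward) solution of the switched system `ẋ = f_{σ(t)}(x)`
relative to the switching signal `σ`: continuous on `[0,∞)` and at each `t ≥ 0`
right-differentiable with right derivative `f_{σ(t)}(x(t))`. -/
def IsSolution {I : Type*} {n : ℕ}
    (f : I → EuclideanSpace ℝ (Fin n) → EuclideanSpace ℝ (Fin n))
    (σ : SwitchingSignal I) (x : ℝ → EuclideanSpace ℝ (Fin n)) : Prop :=
  ContinuousOn x (Set.Ici 0) ∧
    ∀ t : ℝ, 0 ≤ t → HasDerivWithinAt x (f (σ.toFun t) (x t)) (Set.Ici t) t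

/-- A solution of the single subsystem `ẋ = f_i(x)`. -/
def IsSubSolution {I : Type*} {n : ℕ}
    (f : I → EuclideanSpace ℝ (Fin n) → EuclideanSpace ℝ (Fin n))
    (i : I) (x : ℝ → EuclideanSpace ℝ (Fin n)) : Prop :=
  ContinuousOn x (Set.Ici 0) ∧
    ∀ t : ℝ, 0 ≤ t → HasDerivWithinAt x (f i (x t)) (Set.Ici t) t

/-- Well-posedness of the family `{f_i}`: each `f_i` vanishes at the origin and each
subsystem has a unique forward solution from every initial condition; `Φ i` is the
corresponding (semi-)flow. -/
structure WellPosed {I : Type*} {n : ℕ}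
    (f : I → EuclideanSpace ℝ (Fin n) → EuclideanSpace ℝ (Fin n)) where
  zero : ∀ i, f i 0 = 0
  Φ : I → ℝ → EuclideanSpace ℝ (Fin n) → EuclideanSpace ℝ (Fin n)
  isSol : ∀ i x₀, IsSubSolution f i (fun t => Φ i t x₀)
  init : ∀ i x₀, Φ i 0 x₀ = x₀
  unique : ∀ (i : I) (x₀ : EuclideanSpace ℝ (Fin n)) (y : ℝ → EuclideanSpace ℝ (Fin n)),
    IsSubSolution f i y → y 0 = x₀ → ∀ t : ℝ, 0 ≤ t → y t = Φ i t x₀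

/-- Uniform global asymptotic stability with respect to a class of switching signals. -/
def UGAS {I : Type*} {n : ℕ}
    (f : I → EuclideanSpace ℝ (Fin n) → EuclideanSpace ℝ (Fin n))
    (Scl : SwitchingSignal I → Prop) : Prop :=
  ∃ β : ℝ → ℝ → ℝ, IsClassKL β ∧
    ∀ σ : SwitchingSignal I, Scl σ → ∀ x : ℝ → EuclideanSpace ℝ (Fin n),
      IsSolution f σ x → ∀ t : ℝ, 0 ≤ t → ‖x t‖ ≤ β ‖x 0‖ t

/-- Uniform global exponential stability with decay `ρ`, with respect to
a class of switching signals. -/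
def UGES {I : Type*} {n : ℕ}
    (f : I → EuclideanSpace ℝ (Fin n) → EuclideanSpace ℝ (Fin n))
    (ρ : ℝ) (Scl : SwitchingSignal I → Prop) : Prop :=
  ∃ M : ℝ, 0 ≤ M ∧
    ∀ σ : SwitchingSignal I, Scl σ → ∀ x : ℝ → EuclideanSpace ℝ (Fin n),
      IsSolution f σ x → ∀ t : ℝ, 0 ≤ t → ‖x t‖ ≤ M * Real.exp (-ρ * t) * ‖x 0‖

/-- `τ`-dependent uniform global boundedness (`τ`-UGB). -/
def TauUGB {I : Type*} {n : ℕ}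
    (f : I → EuclideanSpace ℝ (Fin n) → EuclideanSpace ℝ (Fin n)) (τ : ℝ) : Prop :=
  ∃ η₁ η₂ : ℝ → ℝ, ∃ α : ℝ, IsClassKInf η₁ ∧ IsClassKInf η₂ ∧ 0 ≤ α ∧
    ∀ σ : SwitchingSignal I, ∀ x : ℝ → EuclideanSpace ℝ (Fin n), IsSolution f σ x →
      ∀ t : ℝ, 0 ≤ t →
        ‖x t‖ ≤ η₁ (Real.exp (α * τ * (Nsw σ 0 t : ℝ)) * Real.exp (-(1 + α) * t) * η₂ ‖x 0‖)

/-- `τ`-dependent uniform global exponential boundedness with decay `ρ` (`τ`-UGEB_ρ). -/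
def TauUGEB {I : Type*} {n : ℕ}
    (f : I → EuclideanSpace ℝ (Fin n) → EuclideanSpace ℝ (Fin n)) (τ ρ : ℝ) : Prop :=
  ∃ M α : ℝ, 0 < M ∧ 0 ≤ α ∧
    ∀ σ : SwitchingSignal I, ∀ x : ℝ → EuclideanSpace ℝ (Fin n), IsSolution f σ x →
      ∀ t : ℝ, 0 ≤ t →
        ‖x t‖ ≤ M * Real.exp (α * τ * (Nsw σ 0 t : ℝ)) * Real.exp (-(ρ + α) * t) * ‖x 0‖

/-- `Lip₀`: locally Lipschitz on `ℝⁿ \ {0}`. -/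
def Lip0 {n : ℕ} (V : EuclideanSpace ℝ (Fin n) → ℝ) : Prop :=
  ∀ x : EuclideanSpace ℝ (Fin n), x ≠ 0 →
    ∃ (K : NNReal) (s : Set (EuclideanSpace ℝ (Fin n))), s ∈ nhds x ∧ LipschitzOnWith K V s

/-- The Dini derivative of `V` along the flow `Φi` :
`D⁺V(x) = limsup_{h→0⁺} (V(Φi(h,x)) - V(x))/h`, with values in `EReal`. -/
def dini {n : ℕ} (Φi : ℝ → EuclideanSpace ℝ (Fin n) → EuclideanSpace ℝ (Fin n))
    (V : EuclideanSpace ℝ (Fin n) → ℝ) (x : EuclideanSpace ℝ (Fin n)) : EReal :=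
  Filter.limsup (fun h : ℝ => (((V (Φi h x) - V x) / h : ℝ) : EReal))
    (nhdsWithin 0 (Set.Ioi 0))

/-- A solution of the switched linear system `ẋ = A_{σ(t)} x`. -/
def IsLinSolution {m n : ℕ} (A : Fin m → Matrix (Fin n) (Fin n) ℝ)
    (σ : SwitchingSignal (Fin m)) (x : ℝ → EuclideanSpace ℝ (Fin n)) : Prop :=
  ContinuousOn x (Set.Ici 0) ∧
    ∀ t : ℝ, 0 ≤ t →
      HasDerivWithinAt x (Matrix.toEuclideanLin (A (σ.toFun t)) (x t)) (Set.Ici t) t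

/-- UGES_ρ for the switched linear system, w.r.t. a class of switching signals. -/
def LinUGES {m n : ℕ} (A : Fin m → Matrix (Fin n) (Fin n) ℝ) (ρ : ℝ)
    (Scl : SwitchingSignal (Fin m) → Prop) : Prop :=
  ∃ M : ℝ, 0 ≤ M ∧
    ∀ σ : SwitchingSignal (Fin m), Scl σ → ∀ x : ℝ → EuclideanSpace ℝ (Fin n),
      IsLinSolution A σ x → ∀ t : ℝ, 0 ≤ t → ‖x t‖ ≤ M * Real.exp (-ρ * t) * ‖x 0‖

/-- `τ`-UGEB_ρ for the switched linear system. -/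
def LinTauUGEB {m n : ℕ} (A : Fin m → Matrix (Fin n) (Fin n) ℝ) (τ ρ : ℝ) : Prop :=
  ∃ M α : ℝ, 0 < M ∧ 0 ≤ α ∧
    ∀ σ : SwitchingSignal (Fin m), ∀ x : ℝ → EuclideanSpace ℝ (Fin n),
      IsLinSolution A σ x → ∀ t : ℝ, 0 ≤ t →
        ‖x t‖ ≤ M * Real.exp (α * τ * (Nsw σ 0 t : ℝ)) * Real.exp (-(ρ + α) * t) * ‖x 0‖

/-- The Dini derivative of `v` along the linear flow of `A`:
`D⁺_A v(x) = limsup_{h→0⁺} (v(exp(hA)x) - v(x))/h`, with values in `EReal`. -/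
def diniLin {n : ℕ} (A : Matrix (Fin n) (Fin n) ℝ)
    (v : EuclideanSpace ℝ (Fin n) → ℝ) (x : EuclideanSpace ℝ (Fin n)) : EReal :=
  Filter.limsup
    (fun h : ℝ =>
      (((v (Matrix.toEuclideanLin (NormedSpace.exp (h • A)) x) - v x) / h : ℝ) : EReal))
    (nhdsWithin 0 (Set.Ioi 0))

/-- `v : ℝⁿ → ℝ` is a norm. -/
def IsNorm {n : ℕ} (v : EuclideanSpace ℝ (Fin n) → ℝ) : Prop :=
  (∀ x, v x = 0 ↔ x = 0) ∧
  (∀ (c : ℝ) (x : EuclideanSpace ℝ (Fin n)), v (c • x) = |c| * v x) ∧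
  (∀ x y : EuclideanSpace ℝ (Fin n), v (x + y) ≤ v x + v y)

/-- `Ψ_ε(t) = min_{s ∈ [0,t]} (ρ(s) + ε (t - s))`. -/
def Psi (ε : ℝ) (ρ : ℝ → ℝ) (t : ℝ) : ℝ :=
  sInf ((fun s => ρ s + ε * (t - s)) '' Set.Icc 0 t)

end

open Set Filter Real intervalIntegral
open scoped Topology

noncomputable section Aux

variable {θ α : ℝ → ℝ}

lemma classK_nonneg (hc : ContinuousOn α (Set.Ici 0)) (h0 : α 0 = 0)
    (hm : StrictMonoOn α (Set.Ici 0)) {r : ℝ} (hr : 0 ≤ r) : 0 ≤ α r := by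
  rcases eq_or_lt_of_le hr with rfl | hr
  · exact le_of_eq h0.symm
  · exact le_of_lt (h0 ▸ hm (le_refl (0:ℝ)) (le_of_lt hr) hr)

lemma classK_pos (h0 : α 0 = 0) (hm : StrictMonoOn α (Set.Ici 0)) {r : ℝ} (hr : 0 < r) :
    0 < α r := h0 ▸ hm (le_refl (0:ℝ)) (le_of_lt hr) hr

/-- Extension of a class `K∞` function to all of `ℝ`. -/
def extK (θ : ℝ → ℝ) : ℝ → ℝ := fun r => if r ≤ 0 then r else θ r

lemma extK_strictMono (hc : ContinuousOn θ (Set.Ici 0)) (h0 : θ 0 = 0)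
    (hm : StrictMonoOn θ (Set.Ici 0)) : StrictMono (extK θ) := by
  intro a b hab
  unfold extK
  by_cases ha : a ≤ 0 <;> by_cases hb : b ≤ 0 <;> simp only [ha, hb, if_true, if_false]
  · exact hab
  · push_neg at hb
    calc a ≤ 0 := ha
    _ < θ b := classK_pos h0 hm hb
  · exact absurd (hab.trans_le hb) (not_lt.2 (le_of_not_ge ha))
  · push_neg at ha hb
    exact hm (le_of_lt ha) (le_of_lt hb) hab

lemma extK_surj (hc : ContinuousOn θ (Set.Ici 0)) (h0 : θ 0 = 0)
    (hm : StrictMonoOn θ (Set.Ici 0)) (hu : ∀ M : ℝ, ∃ r : ℝ, 0 ≤ r ∧ M ≤ θ r) :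
    Function.Surjective (extK θ) := by
  intro y
  rcases le_or_gt y 0 with hy | hy
  · exact ⟨y, by simp [extK, hy]⟩
  · obtain ⟨R, hR0, hRy⟩ := hu y
    have h0R : (0:ℝ) ≤ R := hR0
    have : ∃ r ∈ Set.Icc 0 R, θ r = y := by
      apply intermediate_value_Icc h0R (hc.mono (Set.Icc_subset_Ici_self))
      constructor
      · rw [h0]; exact le_of_lt hy
      · exact hRy
    obtain ⟨r, ⟨hr0, _⟩, hry⟩ := this
    have hrpos : 0 < r := by
      rcases eq_or_lt_of_le hr0 with rfl | h
      · exact absurd (h0 ▸ hry) (ne_of_lt hy)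
      · exact h
    exact ⟨r, by simp [extK, not_le.2 hrpos, hry]⟩

/-- Inverse of a class `K∞` function. -/
lemma classKInf_inverse
    (hθ : (ContinuousOn θ (Set.Ici 0) ∧ θ 0 = 0 ∧ StrictMonoOn θ (Set.Ici 0)) ∧
      ∀ M : ℝ, ∃ r : ℝ, 0 ≤ r ∧ M ≤ θ r) :
    ∃ η : ℝ → ℝ,
      ((ContinuousOn η (Set.Ici 0) ∧ η 0 = 0 ∧ StrictMonoOn η (Set.Ici 0)) ∧
        ∀ M : ℝ, ∃ r : ℝ, 0 ≤ r ∧ M ≤ η r) ∧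
      (∀ r : ℝ, 0 ≤ r → η (θ r) = r) ∧ (∀ y : ℝ, 0 ≤ y → θ (η y) = y) := by
  obtain ⟨⟨hc, h0, hm⟩, hu⟩ := hθ
  have hsm := extK_strictMono hc h0 hm
  have hsj := extK_surj hc h0 hm hu
  set e : ℝ ≃o ℝ := StrictMono.orderIsoOfSurjective (extK θ) hsm hsj with he
  have hee : ∀ r, e r = extK θ r := fun r => rfl
  refine ⟨fun y => e.symm y, ?_, ?_, ?_⟩
  · have hext : ∀ r : ℝ, 0 ≤ r → extK θ r = θ r := by
      intro r hr
      rcases eq_or_lt_of_le hr with rfl | h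
      · simp [extK, h0]
      · simp [extK, not_le.2 h]
    have h00 : e 0 = 0 := by rw [hee]; simp [extK]
    have hsymm0 : e.symm 0 = 0 := e.symm_apply_eq.mpr h00.symm
    refine ⟨⟨(e.symm.continuous.continuousOn), hsymm0, fun a _ b _ hab => e.symm.strictMono hab⟩, ?_⟩
    intro M
    refine ⟨θ (max M 0), ?_, ?_⟩
    · exact classK_nonneg hc h0 hm (le_max_right _ _)
    · have : e.symm (extK θ (max M 0)) = max M 0 := by
        rw [← hee, e.symm_apply_apply]
      rw [hext _ (le_max_right M 0)] at this
      show M ≤ e.symm (θ (max M 0))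
      rw [this]; exact le_max_left _ _
  · intro r hr
    have hext : extK θ r = θ r := by
      rcases eq_or_lt_of_le hr with rfl | h
      · simp [extK, h0]
      · simp [extK, not_le.2 h]
    show e.symm (θ r) = r
    rw [← hext, ← hee]; exact e.symm_apply_apply r
  · intro y hy
    show θ (e.symm y) = y
    have h1 : e (e.symm y) = y := e.apply_symm_apply y
    have h2 : 0 ≤ e.symm y := by
      have h4 : e.symm 0 ≤ e.symm y := e.symm.monotone hy
      have h00 : e 0 = 0 := by rw [hee]; simp [extK]
      have h3 : e.symm 0 = 0 := e.symm_apply_eq.mpr h00.symm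
      linarith [h3 ▸ h4]
    rw [hee] at h1
    rcases eq_or_lt_of_le h2 with h2' | h2'
    · rw [← h2'] at h1 ⊢
      simpa [extK, h0] using h1
    · rw [extK, if_neg (not_le.2 h2')] at h1
      exact h1

end Aux

noncomputable section PsiLemmas

variable {ε τstar : ℝ} {ρfun χ : ℝ → ℝ}

lemma psi_bddBelow (hε : 0 < ε) (hρ : IsClassK ρfun) {t : ℝ} (ht : 0 ≤ t) :
    ∀ y ∈ (fun s => ρfun s + ε * (t - s)) '' Set.Icc 0 t, (0:ℝ) ≤ y := by
  rintro y ⟨s, ⟨hs0, hst⟩, rfl⟩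
  have h1 : 0 ≤ ρfun s := classK_nonneg hρ.1 hρ.2.1 hρ.2.2 hs0
  show (0:ℝ) ≤ ρfun s + ε * (t - s)
  nlinarith

lemma psi_nonneg (hε : 0 < ε) (hρ : IsClassK ρfun) {t : ℝ} (ht : 0 ≤ t) :
    0 ≤ Psi ε ρfun t :=
  le_csInf ⟨ρfun 0 + ε * (t - 0), ⟨0, ⟨le_refl _, ht⟩, rfl⟩⟩ (psi_bddBelow hε hρ ht)

lemma psi_le_linear (hε : 0 < ε) (hρ : IsClassK ρfun) {t : ℝ} (ht : 0 ≤ t) :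
    Psi ε ρfun t ≤ ε * t := by
  have : ρfun 0 + ε * (t - 0) ∈ (fun s => ρfun s + ε * (t - s)) '' Set.Icc 0 t :=
    ⟨0, ⟨le_refl _, ht⟩, rfl⟩
  have h : Psi ε ρfun t ≤ ρfun 0 + ε * (t - 0) := csInf_le ⟨0, psi_bddBelow hε hρ ht⟩ this
  rw [hρ.2.1] at h
  simpa using h

lemma psi_le_rho (hε : 0 < ε) (hρ : IsClassK ρfun) {t : ℝ} (ht : 0 ≤ t) :
    Psi ε ρfun t ≤ ρfun t := by
  have : ρfun t + ε * (t - t) ∈ (fun s => ρfun s + ε * (t - s)) '' Set.Icc 0 t :=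
    ⟨t, ⟨ht, le_refl _⟩, rfl⟩
  have h : Psi ε ρfun t ≤ ρfun t + ε * (t - t) := csInf_le ⟨0, psi_bddBelow hε hρ ht⟩ this
  simpa using h

lemma psi_pos (hε : 0 < ε) (hρ : IsClassK ρfun) {t : ℝ} (ht : 0 < t) :
    0 < Psi ε ρfun t := by
  have hb : 0 < min (ρfun (t/2)) (ε * (t/2)) := by
    apply lt_min
    · exact classK_pos hρ.2.1 hρ.2.2 (by linarith)
    · positivity
  refine lt_of_lt_of_le hb (le_csInf ⟨ρfun 0 + ε * (t - 0), ⟨0, ⟨le_refl _, le_of_lt ht⟩, rfl⟩⟩ ?_)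
  rintro y ⟨s, ⟨hs0, hst⟩, rfl⟩
  rcases le_or_gt s (t/2) with h | h
  · have : ε * (t/2) ≤ ε * (t - s) := by nlinarith
    have h1 : 0 ≤ ρfun s := classK_nonneg hρ.1 hρ.2.1 hρ.2.2 hs0
    calc min (ρfun (t/2)) (ε * (t/2)) ≤ ε * (t/2) := min_le_right _ _
    _ ≤ ρfun s + ε * (t - s) := by linarith
  · have h1 : ρfun (t/2) ≤ ρfun s := by
      rcases eq_or_lt_of_le (le_of_lt h) with rfl | h'
      · exact le_refl _
      · exact le_of_lt (hρ.2.2 (by simp only [Set.mem_Ici]; linarith) (by simp only [Set.mem_Ici]; linarith) h')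
    have : 0 ≤ ε * (t - s) := by nlinarith
    calc min (ρfun (t/2)) (ε * (t/2)) ≤ ρfun (t/2) := min_le_left _ _
    _ ≤ ρfun s + ε * (t - s) := by linarith

lemma psi_mono (hε : 0 < ε) (hρ : IsClassK ρfun) {s t : ℝ} (hs : 0 ≤ s) (hst : s ≤ t) :
    Psi ε ρfun s ≤ Psi ε ρfun t := by
  have ht : 0 ≤ t := hs.trans hst
  refine le_csInf ⟨ρfun 0 + ε * (t - 0), ⟨0, ⟨le_refl _, ht⟩, rfl⟩⟩ ?_
  rintro y ⟨u, ⟨hu0, hut⟩, rfl⟩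
  rcases le_or_gt u s with h | h
  · calc Psi ε ρfun s ≤ ρfun u + ε * (s - u) :=
      csInf_le ⟨0, psi_bddBelow hε hρ hs⟩ ⟨u, ⟨hu0, h⟩, rfl⟩
    _ ≤ ρfun u + ε * (t - u) := by nlinarith
  · have h1 : ρfun s ≤ ρfun u := by
      rcases eq_or_lt_of_le (le_of_lt h) with rfl | h'
      · exact le_refl _
      · exact le_of_lt (hρ.2.2 hs (hs.trans (le_of_lt h)) h')
    have h2 : 0 ≤ ε * (t - u) := by nlinarith
    calc Psi ε ρfun s ≤ ρfun s := psi_le_rho hε hρ hs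
    _ ≤ ρfun u + ε * (t - u) := by linarith

lemma psi_lip (hε : 0 < ε) (hρ : IsClassK ρfun) {s t : ℝ} (hs : 0 ≤ s) (hst : s ≤ t) :
    Psi ε ρfun t ≤ Psi ε ρfun s + ε * (t - s) := by
  have ht : 0 ≤ t := hs.trans hst
  have key : ∀ u ∈ Set.Icc (0:ℝ) s, Psi ε ρfun t ≤ ρfun u + ε * (s - u) + ε * (t - s) := by
    rintro u ⟨hu0, hus⟩
    have : Psi ε ρfun t ≤ ρfun u + ε * (t - u) :=
      csInf_le ⟨0, psi_bddBelow hε hρ ht⟩ ⟨u, ⟨hu0, hus.trans hst⟩, rfl⟩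
    linarith
  have : Psi ε ρfun t - ε * (t - s) ≤ Psi ε ρfun s := by
    refine le_csInf ⟨ρfun 0 + ε * (s - 0), ⟨0, ⟨le_refl _, hs⟩, rfl⟩⟩ ?_
    rintro y ⟨u, hu, rfl⟩
    have := key u hu
    simp only at this ⊢
    linarith
  linarith

lemma psi_continuousOn (hε : 0 < ε) (hρ : IsClassK ρfun) :
    ContinuousOn (Psi ε ρfun) (Set.Ici 0) := by
  have : LipschitzOnWith (Real.toNNReal ε) (Psi ε ρfun) (Set.Ici 0) := by
    rw [lipschitzOnWith_iff_dist_le_mul]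
    intro x hx y hy
    rw [Real.dist_eq, Real.dist_eq, Real.coe_toNNReal _ (le_of_lt hε)]
    rcases le_total y x with h | h
    · rw [abs_of_nonneg (by linarith [psi_mono hε hρ hy h] : (0:ℝ) ≤ Psi ε ρfun x - Psi ε ρfun y),
        abs_of_nonneg (by linarith : (0:ℝ) ≤ x - y)]
      linarith [psi_lip hε hρ hy h]
    · rw [abs_of_nonpos (by linarith [psi_mono hε hρ hx h] : Psi ε ρfun x - Psi ε ρfun y ≤ 0),
        abs_of_nonpos (by linarith : x - y ≤ 0)]
      linarith [psi_lip hε hρ hx h]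
  exact this.continuousOn

end PsiLemmas

noncomputable section PhiLemmas

variable {ε τstar : ℝ} {ρfun χ : ℝ → ℝ}

/-- `φ(s) = ∫_1^s dr/Ψ_ε(r)`. -/
def phiF (ε : ℝ) (ρfun : ℝ → ℝ) (s : ℝ) : ℝ := ∫ r in (1:ℝ)..s, (Psi ε ρfun r)⁻¹

lemma uIcc_subset_Ioi {a b : ℝ} (ha : 0 < a) (hb : 0 < b) : Set.uIcc a b ⊆ Set.Ioi 0 := by
  intro x hx
  rcases Set.mem_uIcc.mp hx with ⟨h, _⟩ | ⟨h, _⟩ <;> simp only [Set.mem_Ioi] <;> linarith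

lemma invPsi_contOn (hε : 0 < ε) (hρ : IsClassK ρfun) :
    ContinuousOn (fun r => (Psi ε ρfun r)⁻¹) (Set.Ioi 0) :=
  ContinuousOn.inv₀ ((psi_continuousOn hε hρ).mono Set.Ioi_subset_Ici_self)
    (fun r hr => ne_of_gt (psi_pos hε hρ hr))

lemma invPsi_intg (hε : 0 < ε) (hρ : IsClassK ρfun) {a b : ℝ} (ha : 0 < a) (hb : 0 < b) :
    IntervalIntegrable (fun r => (Psi ε ρfun r)⁻¹) MeasureTheory.volume a b :=
  ((invPsi_contOn hε hρ).mono (uIcc_subset_Ioi ha hb)).intervalIntegrable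

lemma phiF_sub (hε : 0 < ε) (hρ : IsClassK ρfun) {a b : ℝ} (ha : 0 < a) (hb : 0 < b) :
    phiF ε ρfun b - phiF ε ρfun a = ∫ r in a..b, (Psi ε ρfun r)⁻¹ := by
  have h1 := intervalIntegral.integral_add_adjacent_intervals
    (invPsi_intg hε hρ ha one_pos) (invPsi_intg hε hρ one_pos hb)
  have h2 : ∫ r in a..(1:ℝ), (Psi ε ρfun r)⁻¹ = - phiF ε ρfun a :=
    intervalIntegral.integral_symm 1 a
  simp only [phiF] at h2 ⊢
  linarith

lemma phiF_pos_sub (hε : 0 < ε) (hρ : IsClassK ρfun) {a b : ℝ} (ha : 0 < a) (hab : a < b) :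
    0 < ∫ r in a..b, (Psi ε ρfun r)⁻¹ := by
  apply intervalIntegral.intervalIntegral_pos_of_pos_on (invPsi_intg hε hρ ha (ha.trans hab))
  · intro x hx
    exact inv_pos.mpr (psi_pos hε hρ (ha.trans hx.1))
  · exact hab

lemma phiF_strictMonoOn (hε : 0 < ε) (hρ : IsClassK ρfun) :
    StrictMonoOn (phiF ε ρfun) (Set.Ioi 0) := by
  intro a ha b hb hab
  have := phiF_pos_sub hε hρ (Set.mem_Ioi.mp ha) hab
  have h2 := phiF_sub hε hρ (Set.mem_Ioi.mp ha) (Set.mem_Ioi.mp hb)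
  linarith

lemma phiF_monotoneOn (hε : 0 < ε) (hρ : IsClassK ρfun) :
    MonotoneOn (phiF ε ρfun) (Set.Ioi 0) := (phiF_strictMonoOn hε hρ).monotoneOn

lemma phiF_hasDerivAt (hε : 0 < ε) (hρ : IsClassK ρfun) {s : ℝ} (hs : 0 < s) :
    HasDerivAt (phiF ε ρfun) (Psi ε ρfun s)⁻¹ s := by
  apply intervalIntegral.integral_hasDerivAt_right (invPsi_intg hε hρ one_pos hs)
  · exact (invPsi_contOn hε hρ).stronglyMeasurableAtFilter isOpen_Ioi s hs
  · exact (invPsi_contOn hε hρ).continuousAt (isOpen_Ioi.mem_nhds hs)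

lemma phiF_continuousOn (hε : 0 < ε) (hρ : IsClassK ρfun) :
    ContinuousOn (phiF ε ρfun) (Set.Ioi 0) := fun s hs =>
  ((phiF_hasDerivAt hε hρ hs).continuousAt).continuousWithinAt

lemma invLinear_intg (hε : 0 < ε) {a b : ℝ} (ha : 0 < a) (hb : 0 < b) :
    IntervalIntegrable (fun r : ℝ => ε⁻¹ * r⁻¹) MeasureTheory.volume a b := by
  apply ContinuousOn.intervalIntegrable
  exact continuousOn_const.mul (ContinuousOn.inv₀ continuousOn_id
    (fun x hx => ne_of_gt (uIcc_subset_Ioi ha hb hx)))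

lemma integral_inv_linear (hε : 0 < ε) {a b : ℝ} (ha : 0 < a) (hb : 0 < b) :
    ∫ r in a..b, ε⁻¹ * r⁻¹ = ε⁻¹ * Real.log (b / a) := by
  rw [intervalIntegral.integral_const_mul, integral_inv]
  intro h
  exact absurd (uIcc_subset_Ioi ha hb h) (by simp)

lemma invPsi_ge (hε : 0 < ε) (hρ : IsClassK ρfun) {r : ℝ} (hr : 0 < r) :
    ε⁻¹ * r⁻¹ ≤ (Psi ε ρfun r)⁻¹ := by
  rw [← mul_inv]
  exact inv_anti₀ (psi_pos hε hρ hr) (psi_le_linear hε hρ (le_of_lt hr))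

lemma phiF_ge_log (hε : 0 < ε) (hρ : IsClassK ρfun) {s : ℝ} (hs : 1 ≤ s) :
    ε⁻¹ * Real.log s ≤ phiF ε ρfun s := by
  have h1 : ∫ r in (1:ℝ)..s, ε⁻¹ * r⁻¹ ≤ phiF ε ρfun s := by
    apply intervalIntegral.integral_mono_on (by linarith)
      (invLinear_intg hε one_pos (by linarith))
      (invPsi_intg hε hρ one_pos (by linarith))
    intro x hx
    exact invPsi_ge hε hρ (by linarith [hx.1])
  rw [integral_inv_linear hε one_pos (by linarith : (0:ℝ) < s)] at h1
  simpa using h1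
lemma phiF_le_log (hε : 0 < ε) (hρ : IsClassK ρfun) {s : ℝ} (hs0 : 0 < s) (hs : s ≤ 1) :
    phiF ε ρfun s ≤ ε⁻¹ * Real.log s := by
  have h1 : ∫ r in s..(1:ℝ), ε⁻¹ * r⁻¹ ≤ ∫ r in s..(1:ℝ), (Psi ε ρfun r)⁻¹ := by
    apply intervalIntegral.integral_mono_on hs
      (invLinear_intg hε hs0 one_pos)
      (invPsi_intg hε hρ hs0 one_pos)
    intro x hx
    exact invPsi_ge hε hρ (lt_of_lt_of_le hs0 hx.1)
  have h2 : ∫ r in s..(1:ℝ), (Psi ε ρfun r)⁻¹ = - phiF ε ρfun s :=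
    intervalIntegral.integral_symm 1 s
  rw [integral_inv_linear hε hs0 one_pos] at h1
  have h3 : Real.log (1 / s) = - Real.log s := by
    rw [one_div, Real.log_inv]
  rw [h3] at h1
  have hε' : 0 < ε⁻¹ := inv_pos.mpr hε
  nlinarith [h1, h2]

lemma phiF_jump (hε : 0 < ε) (hρ : IsClassK ρfun) (hχ : IsClassKInf χ)
    (hsup : ∀ s : ℝ, 0 < s → (∫ r in s..(χ s), (Psi ε ρfun r)⁻¹) ≤ τstar)
    {s : ℝ} (hs : 0 < s) : phiF ε ρfun (χ s) ≤ phiF ε ρfun s + τstar := by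
  have hχs : 0 < χ s := classK_pos hχ.1.2.1 hχ.1.2.2 hs
  have := phiF_sub hε hρ hs hχs
  linarith [hsup s hs]

end PhiLemmas

noncomputable section FlowLemmas

variable {m n : ℕ} {f : Fin m → EuclideanSpace ℝ (Fin n) → EuclideanSpace ℝ (Fin n)}

lemma flow_zero (F : WellPosed f) (i : Fin m) {t : ℝ} (ht : 0 ≤ t) : F.Φ i t 0 = 0 := by
  have hsub : IsSubSolution f i (fun _ => (0 : EuclideanSpace ℝ (Fin n))) := by
    refine ⟨continuousOn_const, fun t _ => ?_⟩
    simpa [F.zero i] using hasDerivWithinAt_const t (Set.Ici t) (0 : EuclideanSpace ℝ (Fin n))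
  exact (F.unique i 0 _ hsub rfl t ht).symm

lemma flow_shift (F : WellPosed f) (i : Fin m) (x₀ : EuclideanSpace ℝ (Fin n)) {s : ℝ}
    (hs : 0 ≤ s) : IsSubSolution f i (fun t => F.Φ i (s + t) x₀) := by
  obtain ⟨hc, hd⟩ := F.isSol i x₀
  constructor
  · exact hc.comp (continuous_const.add continuous_id).continuousOn
      (fun t ht => add_nonneg hs ht)
  · intro t ht
    have h1 := hd (s + t) (add_nonneg hs ht)
    have h2 : HasDerivWithinAt (fun u : ℝ => s + u) 1 (Set.Ici t) t :=
      (hasDerivWithinAt_id t (Set.Ici t)).const_add s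
    have h3 := HasDerivWithinAt.scomp t h1 h2
      (fun u hu => by simpa using add_le_add_left (Set.mem_Ici.mp hu) s)
    simpa [Function.comp_def] using h3

lemma flow_add (F : WellPosed f) (i : Fin m) (x₀ : EuclideanSpace ℝ (Fin n)) {s t : ℝ}
    (hs : 0 ≤ s) (ht : 0 ≤ t) : F.Φ i (s + t) x₀ = F.Φ i t (F.Φ i s x₀) :=
  F.unique i (F.Φ i s x₀) _ (flow_shift F i x₀ hs) (by rw [add_zero]) t ht

/-- On an interval free of switching instants a solution follows the flow of the active mode. -/
lemma sol_is_flow (F : WellPosed f) {σ : SwitchingSignal (Fin m)}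
    {x : ℝ → EuclideanSpace ℝ (Fin n)} (hx : IsSolution f σ x) {a b : ℝ}
    (ha : 0 ≤ a) (hab : a ≤ b) (hgap : σ.instants ∩ Set.Ioo a b = ∅) :
    ∀ u ∈ Set.Icc a b, x u = F.Φ (σ.toFun a) (u - a) (x a) := by
  set i := σ.toFun a with hi
  set M := b - a with hM
  have hM0 : 0 ≤ M := by simp [hM]; linarith
  have hσs : ∀ s, a ≤ s → s < b → σ.toFun s = i := by
    intro s has hsb
    refine (σ.const_between a s ha has ?_).symm
    apply Set.eq_empty_of_subset_empty
    rw [← hgap]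
    exact Set.inter_subset_inter_right _ (fun u hu => ⟨hu.1, lt_of_le_of_lt hu.2 hsb⟩)
  set z : ℝ → EuclideanSpace ℝ (Fin n) :=
    fun s => if s ≤ M then x (a + s) else F.Φ i (s - M) (x b) with hz
  have hzeq1 : ∀ s ≤ M, z s = x (a + s) := fun s hs => by simp [hz, hs]
  have hzeq2 : ∀ s, M ≤ s → z s = F.Φ i (s - M) (x b) := by
    intro s hs
    rcases eq_or_lt_of_le hs with rfl | h
    · rw [hzeq1 _ (le_refl _), sub_self, F.init]
      congr 1; simp [hM]
    · simp [hz, not_le.2 h]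
  have hxb : a + M = b := by simp [hM]
  -- z is a subsolution
  have hzsub : IsSubSolution f i z := by
    constructor
    · -- continuity
      have hz1 : ContinuousOn z (Set.Icc 0 M) := by
        apply ContinuousOn.congr (f := fun s => x (a + s))
        · exact hx.1.comp (continuous_const.add continuous_id).continuousOn
            (fun t htm => add_nonneg ha htm.1)
        · intro s hs; exact hzeq1 s hs.2
      have hz2 : ContinuousOn z (Set.Ici M) := by
        apply ContinuousOn.congr (f := fun s => F.Φ i (s - M) (x b))
        · exact (F.isSol i (x b)).1.comp (continuous_id.sub continuous_const).continuousOn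
            (fun t htm => by simpa using htm)
        · exact fun s hs => hzeq2 s hs
      intro s hs
      apply ContinuousWithinAt.mono _ (Set.Ici_subset_Icc_union_Ici (b := M))
      apply ContinuousWithinAt.union
      · rcases le_or_gt s M with h | h
        · exact hz1 _ ⟨hs, h⟩
        · exact continuousWithinAt_of_notMem_closure
            (by simp only [closure_Icc]; exact fun hc => absurd hc.2 (not_le.2 h))
      · rcases le_or_gt M s with h | h
        · exact hz2 _ h
        · exact continuousWithinAt_of_notMem_closure
            (by simp only [closure_Ici]; exact fun hc => absurd hc (not_le.2 h))
    · -- derivative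
      intro s hs
      rcases lt_or_ge s M with h | h
      · have hard := hx.2 (a + s) (by linarith)
        rw [hσs (a + s) (by linarith) (by rw [← hxb]; linarith)] at hard
        have h2 : HasDerivWithinAt (fun u : ℝ => a + u) 1 (Set.Ici s) s :=
          (hasDerivWithinAt_id s (Set.Ici s)).const_add a
        have h3 : HasDerivWithinAt (fun u => x (a + u)) (f i (x (a + s))) (Set.Ici s) s := by
          have := HasDerivWithinAt.scomp s hard h2
            (fun u hu => by simpa using add_le_add_left (Set.mem_Ici.mp hu) a)
          simpa [Function.comp_def] using this
        have h4 : HasDerivWithinAt z (f i (x (a + s))) (Set.Icc s M) s :=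
          (h3.mono Set.Icc_subset_Ici_self).congr (fun u hu => hzeq1 u hu.2)
            (hzeq1 s (le_of_lt h))
        have h5 : HasDerivWithinAt z (f i (x (a + s))) (Set.Ici s) s :=
          h4.mono_of_mem_nhdsWithin (Icc_mem_nhdsGE_of_mem ⟨le_refl s, h⟩)
        rw [hzeq1 s (le_of_lt h)]
        exact h5
      · have hard := (F.isSol i (x b)).2 (s - M) (by linarith)
        have h2 : HasDerivWithinAt (fun u : ℝ => u - M) 1 (Set.Ici s) s :=
          (hasDerivWithinAt_id s (Set.Ici s)).sub_const M
        have h3 : HasDerivWithinAt (fun u => F.Φ i (u - M) (x b))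
            (f i (F.Φ i (s - M) (x b))) (Set.Ici s) s := by
          have := HasDerivWithinAt.scomp s hard h2
            (fun u hu => by simpa using sub_le_sub_right (Set.mem_Ici.mp hu) M)
          simpa [Function.comp_def] using this
        have h4 : HasDerivWithinAt z (f i (F.Φ i (s - M) (x b))) (Set.Ici s) s :=
          h3.congr (fun u hu => hzeq2 u (h.trans hu)) (hzeq2 s h)
        rw [hzeq2 s h]
        exact h4
  have hz0 : z 0 = x a := by rw [hzeq1 0 hM0, add_zero]
  intro u hu
  have := F.unique i (x a) z hzsub hz0 (u - a) (by linarith [hu.1])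
  rw [← this, hzeq1 (u - a) (by simp [hM]; linarith [hu.2])]
  congr 1
  ring

end FlowLemmas

noncomputable section LyapLemmas

variable {m n : ℕ} {f : Fin m → EuclideanSpace ℝ (Fin n) → EuclideanSpace ℝ (Fin n)}
  {ε τstar : ℝ} {ρfun : ℝ → ℝ}

lemma lip0_continuousAt {W : EuclideanSpace ℝ (Fin n) → ℝ} (hW : Lip0 W)
    {y : EuclideanSpace ℝ (Fin n)} (hy : y ≠ 0) : ContinuousAt W y := by
  obtain ⟨K, s, hs, hK⟩ := hW y hy
  exact (hK.continuousOn y (mem_of_mem_nhds hs)).continuousAt hs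

/-- The key slope estimate coming from the Dini-derivative decrease condition. -/
lemma dini_slope_bound (F : WellPosed f) {V : Fin m → EuclideanSpace ℝ (Fin n) → ℝ}
    {α₁ : ℝ → ℝ}
    (hV : ∀ i, Lip0 (V i)) (hα₁ : IsClassKInf α₁) (hρ : IsClassK ρfun) (hε : 0 < ε)
    (hsand : ∀ i x, α₁ ‖x‖ ≤ V i x)
    (hdec : ∀ i x, dini (F.Φ i) (V i) x ≤ ((-(ρfun (V i x)) : ℝ) : EReal))
    (i : Fin m) {y : EuclideanSpace ℝ (Fin n)} (hy : y ≠ 0) {r : ℝ} (hr : -1 < r) :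
    ∀ᶠ h in nhdsWithin (0:ℝ) (Set.Ioi 0),
      (phiF ε ρfun (V i (F.Φ i h y)) - phiF ε ρfun (V i y)) / h < r := by
  set vy := V i y with hvy
  have hvy0 : 0 < vy := lt_of_lt_of_le (classK_pos hα₁.1.2.1 hα₁.1.2.2 (norm_pos_iff.mpr hy))
    (hsand i y)
  set L := (Psi ε ρfun vy)⁻¹ with hL
  set R := ρfun vy with hR
  have hLpos : 0 < L := inv_pos.mpr (psi_pos hε hρ hvy0)
  have hRpos : 0 < R := classK_pos hρ.2.1 hρ.2.2 hvy0
  have hLR : 1 ≤ L * R := by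
    rw [hL, hR, inv_mul_eq_div, le_div_iff₀ (psi_pos hε hρ hvy0)]
    simpa using psi_le_rho hε hρ (le_of_lt hvy0)
  -- choice of small parameters
  set θ₁ := min (R/2) ((r+1)/(4*L)) with hθ₁
  set κ := min (L/2) ((r+1)/(4*R)) with hκ
  have hθ₁pos : 0 < θ₁ := lt_min (by linarith) (div_pos (by linarith) (by linarith))
  have hκpos : 0 < κ := lt_min (by linarith) (div_pos (by linarith) (by linarith))
  -- (P0) flow tends to y within Ici 0
  have hflow0 : Filter.Tendsto (fun h => F.Φ i h y) (nhdsWithin (0:ℝ) (Set.Ioi 0)) (nhds y) := by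
    have h1 : ContinuousWithinAt (fun h => F.Φ i h y) (Set.Ici 0) 0 :=
      (F.isSol i y).1 0 (Set.mem_Ici.mpr (le_refl 0))
    have h2 := h1.tendsto
    simp only [F.init] at h2
    exact h2.mono_left (nhdsWithin_mono 0 Set.Ioi_subset_Ici_self)
  -- (P3) dini estimate
  have hP3 : ∀ᶠ h in nhdsWithin (0:ℝ) (Set.Ioi 0),
      (V i (F.Φ i h y) - vy) / h < -R + θ₁ := by
    have hlt : dini (F.Φ i) (V i) y < ((-R + θ₁ : ℝ) : EReal) :=
      lt_of_le_of_lt (hdec i y) (by exact_mod_cast (by linarith : -R < -R + θ₁))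
    have := Filter.eventually_lt_of_limsup_lt hlt
    filter_upwards [this] with h hh
    exact_mod_cast hh
  -- (P4) phiF slope near vy
  have hder := phiF_hasDerivAt hε hρ hvy0
  have hslope := hasDerivAt_iff_tendsto_slope.mp hder
  have hP4' : ∀ᶠ w in nhdsWithin vy {vy}ᶜ, |slope (phiF ε ρfun) vy w - L| < κ := by
    have : ∀ᶠ w in nhdsWithin vy {vy}ᶜ, slope (phiF ε ρfun) vy w ∈ Set.Ioo (L - κ) (L + κ) :=
      hslope (Ioo_mem_nhds (by linarith) (by linarith))
    filter_upwards [this] with w hw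
    rw [abs_lt]; exact ⟨by linarith [hw.1], by linarith [hw.2]⟩
  -- w tends to vy and is ≠ vy eventually
  have hVcont : ContinuousAt (V i) y := lip0_continuousAt (hV i) hy
  have hwt : Filter.Tendsto (fun h => V i (F.Φ i h y)) (nhdsWithin (0:ℝ) (Set.Ioi 0)) (nhds vy) :=
    (hVcont.tendsto.comp hflow0)
  have hP4 : ∀ᶠ h in nhdsWithin (0:ℝ) (Set.Ioi 0),
      |slope (phiF ε ρfun) vy (V i (F.Φ i h y)) - L| < κ := by
    have hne : ∀ᶠ h in nhdsWithin (0:ℝ) (Set.Ioi 0), V i (F.Φ i h y) ≠ vy := by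
      filter_upwards [hP3, self_mem_nhdsWithin] with h hh (hh0 : h ∈ Set.Ioi 0)
      have h0 : (0:ℝ) < h := hh0
      have : V i (F.Φ i h y) - vy < (-R + θ₁) * h := by
        rw [div_lt_iff₀ h0] at hh; linarith [hh]
      have hneg : -R + θ₁ < 0 := by
        have : θ₁ ≤ R/2 := min_le_left _ _
        linarith
      intro hcontra
      rw [hcontra] at this
      nlinarith
    have htend : Filter.Tendsto (fun h => V i (F.Φ i h y)) (nhdsWithin (0:ℝ) (Set.Ioi 0))
        (nhdsWithin vy {vy}ᶜ) := by
      rw [tendsto_nhdsWithin_iff]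
      exact ⟨hwt, hne⟩
    exact htend.eventually hP4'
  -- combine
  filter_upwards [hP3, hP4, self_mem_nhdsWithin] with h h3 h4 (h5 : h ∈ Set.Ioi 0)
  have h0 : (0:ℝ) < h := h5
  set w := V i (F.Φ i h y) with hw
  have hneg : -R + θ₁ < 0 := by
    have : θ₁ ≤ R/2 := min_le_left _ _
    linarith
  have hwneg : (w - vy)/h < 0 := lt_trans h3 hneg
  have hwlt : w - vy < 0 := by
    rw [div_lt_iff₀ h0] at hwneg; simpa using hwneg
  set q := slope (phiF ε ρfun) vy w with hq
  have hwne : w - vy ≠ 0 := ne_of_lt hwlt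
  have hsl : q * (w - vy) = phiF ε ρfun w - phiF ε ρfun vy := by
    rw [hq, slope_def_field, div_mul_cancel₀ _ hwne]
  rw [show phiF ε ρfun w - phiF ε ρfun vy = q * (w - vy) from hsl.symm]
  have hsub : L - κ ≤ q := by
    have := abs_lt.mp h4
    linarith [this.1]
  have hLκ : 0 < L - κ := by
    have : κ ≤ L/2 := min_le_left _ _
    linarith
  have step1 : q * (w - vy) / h ≤ (L - κ) * ((w - vy)/h) := by
    rw [mul_div_assoc]
    exact mul_le_mul_of_nonpos_right hsub (le_of_lt hwneg)
  have step2 : (L - κ) * ((w - vy)/h) ≤ (L - κ) * (-R + θ₁) :=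
    mul_le_mul_of_nonneg_left (le_of_lt h3) (le_of_lt hLκ)
  have e1 : L * θ₁ ≤ (r+1)/4 := by
    have h6 : θ₁ ≤ (r+1)/(4*L) := min_le_right _ _
    calc L * θ₁ ≤ L * ((r+1)/(4*L)) := mul_le_mul_of_nonneg_left h6 (le_of_lt hLpos)
    _ = (r+1)/4 := by field_simp
  have e2 : κ * R ≤ (r+1)/4 := by
    have h6 : κ ≤ (r+1)/(4*R) := min_le_right _ _
    calc κ * R ≤ ((r+1)/(4*R)) * R := mul_le_mul_of_nonneg_right h6 (le_of_lt hRpos)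
    _ = (r+1)/4 := by field_simp
  have step3 : (L - κ) * (-R + θ₁) < r := by
    nlinarith [mul_nonneg (le_of_lt hκpos) (le_of_lt hθ₁pos)]
  linarith

/-- Lyapunov decay along a single mode, in `φ`-coordinates. -/
lemma lyap_decay (F : WellPosed f) {V : Fin m → EuclideanSpace ℝ (Fin n) → ℝ} {α₁ : ℝ → ℝ}
    (hV : ∀ i, Lip0 (V i)) (hα₁ : IsClassKInf α₁) (hρ : IsClassK ρfun) (hε : 0 < ε)
    (hsand : ∀ i x, α₁ ‖x‖ ≤ V i x)
    (hdec : ∀ i x, dini (F.Φ i) (V i) x ≤ ((-(ρfun (V i x)) : ℝ) : EReal))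
    (i : Fin m) (x₀ : EuclideanSpace ℝ (Fin n)) {T : ℝ} (hT : 0 ≤ T)
    (hnz : ∀ s ∈ Set.Icc 0 T, F.Φ i s x₀ ≠ 0) :
    phiF ε ρfun (V i (F.Φ i T x₀)) ≤ phiF ε ρfun (V i x₀) - T := by
  set g : ℝ → ℝ := fun s => phiF ε ρfun (V i (F.Φ i s x₀)) with hg
  have hflowc : ContinuousOn (fun s => F.Φ i s x₀) (Set.Icc 0 T) :=
    (F.isSol i x₀).1.mono (fun s hs => hs.1)
  have hvpos : ∀ s ∈ Set.Icc 0 T, 0 < V i (F.Φ i s x₀) := fun s hs =>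
    lt_of_lt_of_le (classK_pos hα₁.1.2.1 hα₁.1.2.2 (norm_pos_iff.mpr (hnz s hs))) (hsand i _)
  have hgc : ContinuousOn g (Set.Icc 0 T) := by
    intro s hs
    have h1 : ContinuousWithinAt (fun s => F.Φ i s x₀) (Set.Icc 0 T) s := hflowc s hs
    have h2 : ContinuousAt (V i) (F.Φ i s x₀) := lip0_continuousAt (hV i) (hnz s hs)
    have h3 : ContinuousAt (phiF ε ρfun) (V i (F.Φ i s x₀)) :=
      (phiF_hasDerivAt hε hρ (hvpos s hs)).continuousAt
    exact ContinuousAt.comp_continuousWithinAt (f := fun u => F.Φ i u x₀)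
      (g := fun v => phiF ε ρfun (V i v)) (h3.comp h2) h1
  have hB' : ∀ s ∈ Set.Ico 0 T,
      HasDerivWithinAt (fun t => g 0 - t) (-1 : ℝ) (Set.Ici s) s := by
    intro s _
    simpa using (hasDerivWithinAt_id s (Set.Ici s)).const_sub (g 0)
  have bound : ∀ s ∈ Set.Ico 0 T, ∀ r : ℝ, (-1:ℝ) < r →
      ∃ᶠ z in nhdsWithin s (Set.Ioi s), slope g s z < r := by
    intro s hs r hr
    have hy : F.Φ i s x₀ ≠ 0 := hnz s ⟨hs.1, le_of_lt hs.2⟩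
    have hev := dini_slope_bound F hV hα₁ hρ hε hsand hdec i hy hr
    have hmap : Filter.Tendsto (fun z => z - s) (nhdsWithin s (Set.Ioi s))
        (nhdsWithin (0:ℝ) (Set.Ioi 0)) := by
      rw [tendsto_nhdsWithin_iff]
      constructor
      · have h1 : Filter.Tendsto (fun z : ℝ => z - s) (nhds s) (nhds (s - s)) :=
          (continuous_id.sub continuous_const).tendsto s
        rw [sub_self] at h1
        exact h1.mono_left nhdsWithin_le_nhds
      · filter_upwards [self_mem_nhdsWithin] with z hz
        exact sub_pos.mpr (Set.mem_Ioi.mp hz)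
    apply Filter.Eventually.frequently
    filter_upwards [hmap.eventually hev, self_mem_nhdsWithin] with z hz (hz2 : z ∈ Set.Ioi s)
    have hzs : s < z := hz2
    have hflowadd : F.Φ i z x₀ = F.Φ i (z - s) (F.Φ i s x₀) := by
      rw [← flow_add F i x₀ hs.1 (by linarith : (0:ℝ) ≤ z - s)]
      congr 1
      ring
    rw [slope_def_field]
    show (g z - g s) / (z - s) < r
    simp only [hg]
    rw [hflowadd]
    exact hz
  have key := image_le_of_liminf_slope_right_le_deriv_boundary (f := g) (a := 0) (b := T)
    (B := fun t => g 0 - t) (B' := fun _ => (-1:ℝ)) hgc (by simp)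
    ((continuous_const.sub continuous_id).continuousOn) hB' bound
  have := key (Set.mem_Icc.mpr ⟨hT, le_refl T⟩)
  simpa [hg, F.init] using this

end LyapLemmas

noncomputable section KofPhi

/-- The auxiliary class-`K∞` functions `r ↦ exp (β φ(α r))` (extended by `0`). -/
lemma KofPhi_classKInf {ε : ℝ} {ρfun αF : ℝ → ℝ} (hε : 0 < ε) (hρ : IsClassK ρfun)
    (hαF : IsClassKInf αF) {β : ℝ} (hβ : 0 < β) :
    IsClassKInf (fun r => if r ≤ 0 then 0 else Real.exp (β * phiF ε ρfun (αF r))) := by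
  set G : ℝ → ℝ := fun r => if r ≤ 0 then 0 else Real.exp (β * phiF ε ρfun (αF r)) with hG
  obtain ⟨⟨hαc, hα0, hαm⟩, hαu⟩ := hαF
  have hαpos : ∀ r : ℝ, 0 < r → 0 < αF r := fun r hr => classK_pos hα0 hαm hr
  have hGpos : ∀ r : ℝ, 0 < r → G r = Real.exp (β * phiF ε ρfun (αF r)) := fun r hr => by
    simp [hG, not_le.2 hr]
  have hGnonneg : ∀ r : ℝ, 0 ≤ G r := by
    intro r
    rcases le_or_gt r 0 with h | h
    · simp [hG, h]
    · rw [hGpos r h]; positivity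
  constructor
  constructor
  · -- continuity on Ici 0
    intro r hr
    rcases eq_or_lt_of_le (Set.mem_Ici.mp hr) with hr0 | hr0
    · -- at 0
      rw [ContinuousWithinAt, ← hr0]
      have hG0 : G 0 = 0 := by simp [hG]
      rw [hG0]
      rw [tendsto_order]
      constructor
      · intro b hb
        filter_upwards with u
        exact lt_of_lt_of_le hb (hGnonneg u)
      · intro b hb
        set A := Real.exp (ε * β⁻¹ * Real.log b) with hA
        have hApos : 0 < A := Real.exp_pos _
        have hαcont : Filter.Tendsto αF (nhdsWithin 0 (Set.Ici 0)) (nhds 0) := by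
          have := (hαc 0 (Set.mem_Ici.mpr (le_refl 0))).tendsto
          rwa [hα0] at this
        have hev : ∀ᶠ u in nhdsWithin 0 (Set.Ici 0), αF u < min A 1 :=
          hαcont.eventually_lt_const (lt_min hApos one_pos)
        filter_upwards [hev] with u hu
        rcases le_or_gt u 0 with h | h
        · simp only [hG, if_pos h]; exact hb
        · rw [hGpos u h]
          have h1 : 0 < αF u := hαpos u h
          have h2 : αF u ≤ 1 := le_of_lt (lt_of_lt_of_le hu (min_le_right _ _))
          have h3 : phiF ε ρfun (αF u) ≤ ε⁻¹ * Real.log (αF u) := phiF_le_log hε hρ h1 h2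
          have h4 : Real.log (αF u) < Real.log A :=
            Real.log_lt_log h1 (lt_of_lt_of_le hu (min_le_left _ _))
          rw [hA, Real.log_exp] at h4
          have h5 : β * phiF ε ρfun (αF u) < Real.log b := by
            have h6 : ε⁻¹ * Real.log (αF u) < β⁻¹ * Real.log b := by
              have := mul_lt_mul_of_pos_left h4 (inv_pos.mpr hε)
              calc ε⁻¹ * Real.log (αF u) < ε⁻¹ * (ε * β⁻¹ * Real.log b) := this
              _ = β⁻¹ * Real.log b := by field_simp
            have h7 : phiF ε ρfun (αF u) < β⁻¹ * Real.log b := lt_of_le_of_lt h3 h6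
            calc β * phiF ε ρfun (αF u) < β * (β⁻¹ * Real.log b) :=
              mul_lt_mul_of_pos_left h7 hβ
            _ = Real.log b := by field_simp
          calc Real.exp (β * phiF ε ρfun (αF u)) < Real.exp (Real.log b) :=
            Real.exp_lt_exp.mpr h5
          _ = b := Real.exp_log hb
    · -- at r > 0 : locally equal to a continuous function
      have hev : ∀ᶠ u in nhds r, G u = Real.exp (β * phiF ε ρfun (αF u)) := by
        filter_upwards [Ioi_mem_nhds hr0] with u (hu : 0 < u)
        exact hGpos u hu
      have hcont : ContinuousAt (fun u => Real.exp (β * phiF ε ρfun (αF u))) r := by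
        have hc1 : ContinuousAt αF r := (hαc r hr).continuousAt
          (Filter.mem_of_superset (Ioi_mem_nhds hr0) Set.Ioi_subset_Ici_self)
        have hc2 : ContinuousAt (phiF ε ρfun) (αF r) :=
          (phiF_hasDerivAt hε hρ (hαpos r hr0)).continuousAt
        have hc3 : ContinuousAt (fun u => phiF ε ρfun (αF u)) r := hc2.comp hc1
        exact Real.continuous_exp.continuousAt.comp (continuousAt_const.mul hc3)
      exact (hcont.congr (Filter.EventuallyEq.symm hev)).continuousWithinAt
  constructor
  · simp [hG]
  · -- strict mono
    intro a ha b hb hab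
    rcases eq_or_lt_of_le (Set.mem_Ici.mp ha) with ha0 | ha0
    · have ha0' : a = 0 := ha0.symm
      subst ha0'
      rw [hGpos b hab]
      simp only [hG, le_refl, if_true]
      positivity
    · rw [hGpos a ha0, hGpos b (lt_trans ha0 hab)]
      apply Real.exp_lt_exp.mpr
      apply mul_lt_mul_of_pos_left _ hβ
      exact phiF_strictMonoOn hε hρ (Set.mem_Ioi.mpr (hαpos a ha0))
        (Set.mem_Ioi.mpr (hαpos b (lt_trans ha0 hab)))
        (hαm (le_of_lt ha0) (le_of_lt (lt_trans ha0 hab)) hab)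
  · -- unbounded
    intro M
    set Mt := max M 1 with hMt
    have hMt1 : (1:ℝ) ≤ Mt := le_max_right _ _
    have hMt0 : (0:ℝ) < Mt := by linarith
    set S := max 1 (Real.exp (ε * β⁻¹ * Real.log Mt)) with hS
    obtain ⟨r, hr0, hrS⟩ := hαu S
    have hS1 : (1:ℝ) ≤ S := le_max_left _ _
    have hαr1 : (1:ℝ) ≤ αF r := le_trans hS1 hrS
    have hrpos : 0 < r := by
      rcases eq_or_lt_of_le hr0 with rfl | h
      · rw [hα0] at hαr1; linarith
      · exact h
    refine ⟨r, hr0, ?_⟩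
    rw [hGpos r hrpos]
    have h1 : ε⁻¹ * Real.log (αF r) ≤ phiF ε ρfun (αF r) := phiF_ge_log hε hρ hαr1
    have h2 : ε * β⁻¹ * Real.log Mt ≤ Real.log (αF r) := by
      calc ε * β⁻¹ * Real.log Mt = Real.log (Real.exp (ε * β⁻¹ * Real.log Mt)) :=
        (Real.log_exp _).symm
      _ ≤ Real.log S := Real.log_le_log (Real.exp_pos _) (le_max_right _ _)
      _ ≤ Real.log (αF r) := Real.log_le_log (by linarith) hrS
    have h3 : β⁻¹ * Real.log Mt ≤ phiF ε ρfun (αF r) := by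
      have := mul_le_mul_of_nonneg_left h2 (le_of_lt (inv_pos.mpr hε))
      calc β⁻¹ * Real.log Mt = ε⁻¹ * (ε * β⁻¹ * Real.log Mt) := by field_simp
      _ ≤ ε⁻¹ * Real.log (αF r) := this
      _ ≤ phiF ε ρfun (αF r) := h1
    calc M ≤ Mt := le_max_left _ _
    _ = Real.exp (Real.log Mt) := (Real.exp_log hMt0).symm
    _ ≤ Real.exp (β * phiF ε ρfun (αF r)) := by
      apply Real.exp_le_exp.mpr
      have := mul_le_mul_of_nonneg_left h3 (le_of_lt hβ)
      calc Real.log Mt = β * (β⁻¹ * Real.log Mt) := by field_simp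
      _ ≤ β * phiF ε ρfun (αF r) := this

end KofPhi

/-- (Liu–Tanwani–Liberzon conditions.) Nonlinear multiple Lyapunov conditions with
gain `χ` and rate `ρ`: if `τ* = sup_{s>0} ∫_s^{χ(s)} dr/Ψ_ε(r)` is finite then the
switched system is `τ`-UGB for every `τ > τ*`. -/
theorem nonlinear_lyapunov_implies_tauUGB {m n : ℕ}
    (f : Fin m → EuclideanSpace ℝ (Fin n) → EuclideanSpace ℝ (Fin n))
    (F : WellPosed f)
    (V : Fin m → EuclideanSpace ℝ (Fin n) → ℝ) (α₁ α₂ ρfun χ : ℝ → ℝ) (ε τstar : ℝ)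
    (hV : ∀ i, Lip0 (V i)) (hα₁ : IsClassKInf α₁) (hα₂ : IsClassKInf α₂)
    (hρ : IsClassK ρfun) (hχ : IsClassKInf χ) (hε : 0 < ε)
    (hsand : ∀ i x, α₁ ‖x‖ ≤ V i x ∧ V i x ≤ α₂ ‖x‖)
    (hdec : ∀ i x, dini (F.Φ i) (V i) x ≤ ((-(ρfun (V i x)) : ℝ) : EReal))
    (hjump : ∀ i j x, V i x ≤ χ (V j x))
    (hsup : ∀ s : ℝ, 0 < s → (∫ r in s..(χ s), (Psi ε ρfun r)⁻¹) ≤ τstar) :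
    ∀ τ : ℝ, τstar < τ → TauUGB f τ := by
  intro τ hτ
  have hidK : IsClassKInf id :=
    ⟨⟨continuousOn_id, rfl, fun a _ b _ h => h⟩, fun M => ⟨max M 0, le_max_right _ _, le_max_left _ _⟩⟩
  rcases Nat.eq_zero_or_pos n with hn | hn
  · -- trivial state space
    subst hn
    refine ⟨id, id, 0, hidK, hidK, le_refl 0, ?_⟩
    intro σ x hx t ht
    have hzero : ∀ v : EuclideanSpace ℝ (Fin 0), v = 0 := fun v => by ext i; exact i.elim0
    rw [hzero (x t), hzero (x 0)]
    simp
  rcases Nat.eq_zero_or_pos m with hm | hm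
  · -- no modes: no switching signals exist
    subst hm
    refine ⟨id, id, 0, hidK, hidK, le_refl 0, ?_⟩
    intro σ
    exact (σ.toFun 0).elim0
  -- main case
  set i₀ : Fin m := ⟨0, hm⟩ with hi₀
  have hτstar : 0 ≤ τstar := by
    set e := EuclideanSpace.single (⟨0, hn⟩ : Fin n) (1:ℝ) with he
    have hne : e ≠ 0 := by
      intro hcon
      have h1 : ‖e‖ = 1 := by rw [he, EuclideanSpace.norm_single]; norm_num
      rw [hcon] at h1; simp at h1
    have hVp : 0 < V i₀ e :=
      lt_of_lt_of_le (classK_pos hα₁.1.2.1 hα₁.1.2.2 (norm_pos_iff.mpr hne)) (hsand i₀ e).1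
    have hmono : V i₀ e ≤ χ (V i₀ e) := hjump i₀ i₀ e
    have hint : 0 ≤ ∫ r in (V i₀ e)..(χ (V i₀ e)), (Psi ε ρfun r)⁻¹ := by
      apply intervalIntegral.integral_nonneg hmono
      intro r hr
      exact inv_nonneg.mpr (psi_nonneg hε hρ (le_trans (le_of_lt hVp) hr.1))
    exact le_trans hint (hsup _ hVp)
  set α : ℝ := τstar / (τ - τstar) with hα
  have hτne : τ - τstar ≠ 0 := by intro h; rw [sub_eq_zero] at h; exact absurd h.symm (ne_of_lt hτ)
  have hα0 : 0 ≤ α := div_nonneg hτstar (by linarith)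
  have h1α : (0:ℝ) < 1 + α := by linarith
  have hkey : (1 + α) * τstar = α * τ := by rw [hα]; field_simp; ring
  set θf : ℝ → ℝ := fun r => if r ≤ 0 then 0 else Real.exp ((1+α) * phiF ε ρfun (α₁ r)) with hθf
  set η₂f : ℝ → ℝ := fun r => if r ≤ 0 then 0 else Real.exp ((1+α) * phiF ε ρfun (α₂ r)) with hη₂f
  have hθK : IsClassKInf θf := KofPhi_classKInf hε hρ hα₁ h1α
  have hη₂K : IsClassKInf η₂f := KofPhi_classKInf hε hρ hα₂ h1α
  obtain ⟨η₁, hη₁K, hη₁θ, hθη₁⟩ :=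
    classKInf_inverse ⟨⟨hθK.1.1, hθK.1.2.1, hθK.1.2.2⟩, hθK.2⟩
  refine ⟨η₁, η₂f, α, hη₁K, hη₂K, hα0, ?_⟩
  intro σ x hx t ht
  have hVpos : ∀ (j : Fin m) (y : EuclideanSpace ℝ (Fin n)), y ≠ 0 → 0 < V j y := fun j y hy =>
    lt_of_lt_of_le (classK_pos hα₁.1.2.1 hα₁.1.2.2 (norm_pos_iff.mpr hy)) (hsand j y).1
  -- the master induction over the number of switching instants
  have master : ∀ N : ℕ, ∀ u : ℝ, 0 ≤ u → Nsw σ 0 u = N →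
      ((∀ s ∈ Set.Icc 0 u, x s ≠ 0) →
        phiF ε ρfun (V (σ.toFun u) (x u)) ≤
          phiF ε ρfun (V (σ.toFun 0) (x 0)) + (N:ℝ) * τstar - u)
      ∧ ((∃ s ∈ Set.Icc 0 u, x s = 0) → x u = 0) := by
    intro N
    induction N using Nat.strong_induction_on with
    | _ N IH =>
    intro u hu hN
    rcases eq_or_lt_of_le hu with hu0 | hu0
    · subst hu0
      constructor
      · intro _
        have hN0 : N = 0 := by rw [← hN]; simp [Nsw]
        rw [hN0]
        simp
      · rintro ⟨s, hs, h0⟩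
        have hs0 : s = 0 := le_antisymm hs.2 hs.1
        rwa [hs0] at h0
    · -- u > 0 : find the last switching instant before u
      set A := σ.instants ∩ Set.Ico 0 u with hA
      have hAfin : A.Finite := (σ.finite_le u).subset
        (fun w hw => ⟨hw.1, le_of_lt hw.2.2⟩)
      have hA0 : (0:ℝ) ∈ A := ⟨σ.zero_mem, le_refl 0, hu0⟩
      have hAne : hAfin.toFinset.Nonempty := ⟨0, hAfin.mem_toFinset.mpr hA0⟩
      set a := hAfin.toFinset.max' hAne with ha
      have haA : a ∈ A := hAfin.mem_toFinset.mp (hAfin.toFinset.max'_mem hAne)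
      have ha0 : 0 ≤ a := haA.2.1
      have hat : a < u := haA.2.2
      have hmax : ∀ w ∈ A, w ≤ a := fun w hw =>
        hAfin.toFinset.le_max' w (hAfin.mem_toFinset.mpr hw)
      have hgap : σ.instants ∩ Set.Ioo a u = ∅ := by
        apply Set.eq_empty_iff_forall_notMem.mpr
        rintro w ⟨hw, haw, hwu⟩
        have h1 : w ≤ a := hmax w ⟨hw, le_trans ha0 (le_of_lt haw), hwu⟩
        linarith
      have hsplit : σ.instants ∩ Set.Ico 0 u = (σ.instants ∩ Set.Ico 0 a) ∪ {a} := by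
        ext w
        simp only [Set.mem_inter_iff, Set.mem_Ico, Set.mem_union, Set.mem_singleton_iff]
        constructor
        · rintro ⟨hw, hw0, hwu⟩
          rcases lt_or_ge w a with h | h
          · exact Or.inl ⟨hw, hw0, h⟩
          · right
            rcases eq_or_lt_of_le h with h' | h'
            · exact h'.symm
            · exact absurd (hmax w ⟨hw, hw0, hwu⟩) (not_le.2 h')
        · rintro (⟨hw, hw0, hwa⟩ | rfl)
          · exact ⟨hw, hw0, lt_trans hwa hat⟩
          · exact ⟨haA.1, ha0, hat⟩
      have hdisj : Disjoint (σ.instants ∩ Set.Ico 0 a) {a} := by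
        rw [Set.disjoint_singleton_right]
        rintro ⟨_, _, hlt⟩
        exact absurd rfl (ne_of_lt hlt)
      have hfin1 : (σ.instants ∩ Set.Ico 0 a).Finite := (σ.finite_le a).subset
        (fun w hw => ⟨hw.1, le_of_lt hw.2.2⟩)
      have hNsw : Nsw σ 0 u = Nsw σ 0 a + 1 := by
        unfold Nsw
        rw [hsplit, Set.ncard_union_eq hdisj hfin1 (Set.finite_singleton a)]
        simp
      have hlt : Nsw σ 0 a < N := by
        rw [← hN, hNsw]
        omega
      have hrep := sol_is_flow F hx ha0 (le_of_lt hat) hgap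
      set i := σ.toFun a with hi
      have hxurep : x u = F.Φ i (u - a) (x a) := hrep u ⟨le_of_lt hat, le_refl u⟩
      constructor
      · intro hnz
        have hnzflow : ∀ s ∈ Set.Icc 0 (u - a), F.Φ i s (x a) ≠ 0 := by
          intro s hs
          have h1 : a + s ∈ Set.Icc a u := ⟨by linarith [hs.1], by linarith [hs.2]⟩
          have h2 := hrep (a + s) h1
          rw [add_sub_cancel_left] at h2
          rw [← h2]
          exact hnz (a + s) ⟨by linarith [hs.1], by linarith [hs.2]⟩
        have hdecay := lyap_decay F hV hα₁ hρ hε (fun j y => (hsand j y).1) hdec i (x a)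
          (by linarith : (0:ℝ) ≤ u - a) hnzflow
        rw [← hxurep] at hdecay
        have hIH := (IH _ hlt a ha0 rfl).1 (fun s hs => hnz s ⟨hs.1, le_trans hs.2 (le_of_lt hat)⟩)
        have hxune : x u ≠ 0 := hnz u ⟨hu, le_refl u⟩
        have hjmp : V (σ.toFun u) (x u) ≤ χ (V i (x u)) := hjump _ _ _
        have hφ1 : phiF ε ρfun (V (σ.toFun u) (x u)) ≤ phiF ε ρfun (χ (V i (x u))) :=
          phiF_monotoneOn hε hρ (Set.mem_Ioi.mpr (hVpos _ _ hxune))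
            (Set.mem_Ioi.mpr (classK_pos hχ.1.2.1 hχ.1.2.2 (hVpos i _ hxune))) hjmp
        have hφ2 : phiF ε ρfun (χ (V i (x u))) ≤ phiF ε ρfun (V i (x u)) + τstar :=
          phiF_jump hε hρ hχ hsup (hVpos i _ hxune)
        have hcast : (N:ℝ) = (Nsw σ 0 a : ℝ) + 1 := by
          rw [← hN, hNsw]
          push_cast
          ring
        rw [hcast]
        linarith [hφ1, hφ2, hdecay, hIH]
      · rintro ⟨s, hs, hzero⟩
        rcases le_or_gt s a with hsa | hsa
        · have hxa : x a = 0 := (IH _ hlt a ha0 rfl).2 ⟨s, ⟨hs.1, hsa⟩, hzero⟩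
          rw [hxurep, hxa, flow_zero F i (by linarith)]
        · have hxs : x s = F.Φ i (s - a) (x a) := hrep s ⟨le_of_lt hsa, hs.2⟩
          have hsplit2 : F.Φ i (u - a) (x a) = F.Φ i (u - s) (F.Φ i (s - a) (x a)) := by
            rw [← flow_add F i (x a) (by linarith [hs.1] : (0:ℝ) ≤ s - a)
              (by linarith [hs.2] : (0:ℝ) ≤ u - s)]
            congr 1
            ring
          rw [hxurep, hsplit2, ← hxs, hzero, flow_zero F i (by linarith [hs.2])]
  -- final assembly
  by_cases hz : ∃ s ∈ Set.Icc 0 t, x s = 0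
  · have hxt0 : x t = 0 := (master _ t ht rfl).2 hz
    rw [hxt0, norm_zero]
    have hη₂nn : 0 ≤ η₂f ‖x 0‖ := classK_nonneg hη₂K.1.1 hη₂K.1.2.1 hη₂K.1.2.2 (norm_nonneg _)
    have harg : 0 ≤ Real.exp (α*τ*(Nsw σ 0 t:ℝ)) * Real.exp (-(1+α)*t) * η₂f ‖x 0‖ := by
      positivity
    calc (0:ℝ) = η₁ 0 := (hη₁K.1.2.1).symm
    _ ≤ η₁ (Real.exp (α*τ*(Nsw σ 0 t:ℝ)) * Real.exp (-(1+α)*t) * η₂f ‖x 0‖) :=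
      (hη₁K.1.2.2.monotoneOn) (Set.mem_Ici.mpr (le_refl 0)) (Set.mem_Ici.mpr harg) harg
  · push_neg at hz
    have hb := (master _ t ht rfl).1 hz
    have hx0 : x 0 ≠ 0 := hz 0 ⟨le_refl 0, ht⟩
    have hxt : x t ≠ 0 := hz t ⟨ht, le_refl t⟩
    have hn0 : 0 < ‖x t‖ := norm_pos_iff.mpr hxt
    have hn00 : 0 < ‖x 0‖ := norm_pos_iff.mpr hx0
    set N := Nsw σ 0 t with hNdef
    have c2 : phiF ε ρfun (V (σ.toFun 0) (x 0)) ≤ phiF ε ρfun (α₂ ‖x 0‖) :=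
      phiF_monotoneOn hε hρ (Set.mem_Ioi.mpr (hVpos (σ.toFun 0) _ hx0))
        (Set.mem_Ioi.mpr (lt_of_lt_of_le (hVpos (σ.toFun 0) _ hx0) (hsand (σ.toFun 0) _).2))
        (hsand (σ.toFun 0) _).2
    have c1 : phiF ε ρfun (α₁ ‖x t‖) ≤ phiF ε ρfun (V (σ.toFun t) (x t)) :=
      phiF_monotoneOn hε hρ (Set.mem_Ioi.mpr (classK_pos hα₁.1.2.1 hα₁.1.2.2 hn0))
        (Set.mem_Ioi.mpr (hVpos (σ.toFun t) _ hxt)) (hsand (σ.toFun t) _).1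
    have hP1 : phiF ε ρfun (α₁ ‖x t‖) ≤ phiF ε ρfun (α₂ ‖x 0‖) + (N:ℝ)*τstar - t := by
      linarith [c1, hb, c2]
    have hmul := mul_le_mul_of_nonneg_left hP1 (le_of_lt h1α)
    have hkeyN : (N:ℝ) * ((1+α)*τstar) = (N:ℝ) * (α*τ) := by rw [hkey]
    have c3 : (1+α) * phiF ε ρfun (α₁ ‖x t‖) ≤
        α*τ*(N:ℝ) + (-(1+α)*t) + (1+α)*phiF ε ρfun (α₂ ‖x 0‖) := by
      nlinarith [hmul, hkeyN]
    have c5 : θf ‖x t‖ ≤ Real.exp (α*τ*(N:ℝ)) * Real.exp (-(1+α)*t) * η₂f ‖x 0‖ := by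
      rw [show θf ‖x t‖ = Real.exp ((1+α) * phiF ε ρfun (α₁ ‖x t‖)) from by
          simp [hθf, not_le.2 hn0],
        show η₂f ‖x 0‖ = Real.exp ((1+α) * phiF ε ρfun (α₂ ‖x 0‖)) from by
          simp [hη₂f, not_le.2 hn00],
        ← Real.exp_add, ← Real.exp_add]
      exact Real.exp_le_exp.mpr c3
    have hθnn : 0 ≤ θf ‖x t‖ := classK_nonneg hθK.1.1 hθK.1.2.1 hθK.1.2.2 (norm_nonneg _)
    calc ‖x t‖ = η₁ (θf ‖x t‖) := (hη₁θ ‖x t‖ (norm_nonneg _)).symm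
    _ ≤ η₁ (Real.exp (α*τ*(N:ℝ)) * Real.exp (-(1+α)*t) * η₂f ‖x 0‖) :=
      (hη₁K.1.2.2.monotoneOn) (Set.mem_Ici.mpr hθnn)
        (Set.mem_Ici.mpr (le_trans hθnn c5)) c5
end

section
/- Let {f_i}_{i∈I} be well-posed. Suppose there exist α₁, α₂ ∈ K∞, ρ ∈ K, χ ∈ K∞, ε > 0 and V₁,…,V_m ∈ Lip₀(ℝⁿ,ℝ) such that for all i, j ∈ I and all x ∈ ℝⁿ: α₁(‖x‖) ≤ V_i(x) ≤ α₂(‖x‖); D⁺_{f_i}V_i(x) ≤ −ρ(V_i(x)); V_i(x) ≤ χ(V_j(x)); and, with Ψ_ε(t) := min_{s∈[0,t]} { ρ(s) + ε(t−s) }, the quantity τ* := sup_{s>0} ∫_s^{χ(s)} dr/Ψ_ε(r) is finite. Then for every τ > τ* there exist W₁,…,W_m ∈ Lip₀(ℝⁿ,ℝ), α̃₁, α̃₂ ∈ K∞ and α ≥ 0 such that for all i, j ∈ I and all x ∈ ℝⁿ: α̃₁(‖x‖) ≤ W_i(x) ≤ α̃₂(‖x‖); D⁺_{f_i}W_i(x)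 ≤ −(1+α) W_i(x); W_i(x) ≤ e^{ατ} W_j(x). -/
namespace NL2L
noncomputable section
open Filter MeasureTheory Set intervalIntegral

variable {ρ : ℝ → ℝ} {c ε : ℝ}

lemma classK_pos (hρ : IsClassK ρ) {r : ℝ} (hr : 0 < r) : 0 < ρ r := by
  have := hρ.2.2 (le_refl (0:ℝ)) (le_of_lt hr) hr
  simpa [hρ.2.1] using this

lemma classK_nonneg (hρ : IsClassK ρ) {r : ℝ} (hr : 0 ≤ r) : 0 ≤ ρ r := by
  rcases eq_or_lt_of_le hr with h | h
  · simp [← h, hρ.2.1]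
  · exact (classK_pos hρ h).le

lemma classK_mono (hρ : IsClassK ρ) : MonotoneOn ρ (Set.Ici 0) := hρ.2.2.monotoneOn

section PsiFacts
variable (hρ : IsClassK ρ) (hε : 0 < ε)
include hρ hε

lemma psi_bddBelow {t : ℝ} (ht : 0 ≤ t) :
    IsCompact ((fun s => ρ s + ε * (t - s)) '' Set.Icc 0 t) := by
  apply isCompact_Icc.image_of_continuousOn
  exact ((hρ.1.mono (fun x hx => hx.1)).add ((continuous_const.mul
    (continuous_const.sub continuous_id)).continuousOn))

lemma psi_nonempty {t : ℝ} (ht : 0 ≤ t) :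
    ((fun s => ρ s + ε * (t - s)) '' Set.Icc 0 t).Nonempty :=
  (Set.nonempty_Icc.2 ht).image _

lemma psi_le_rho {t : ℝ} (ht : 0 ≤ t) : Psi ε ρ t ≤ ρ t := by
  have := csInf_le (psi_bddBelow hρ hε ht).bddBelow
    (Set.mem_image_of_mem _ (Set.right_mem_Icc.2 ht))
  simpa [Psi] using this

lemma psi_le_lin {t : ℝ} (ht : 0 ≤ t) : Psi ε ρ t ≤ ε * t := by
  have := csInf_le (psi_bddBelow hρ hε ht).bddBelow
    (Set.mem_image_of_mem _ (Set.left_mem_Icc.2 ht))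
  simpa [hρ.2.1, Psi] using this

lemma psi_pos {t : ℝ} (ht : 0 < t) : 0 < Psi ε ρ t := by
  have hmem := (psi_bddBelow hρ hε ht.le).sInf_mem (psi_nonempty hρ hε ht.le)
  obtain ⟨s, hs, hval⟩ := hmem
  rw [Psi, ← hval]
  beta_reduce
  rcases eq_or_lt_of_le hs.1 with h | h
  · have : ρ s = 0 := by simp [← h, hρ.2.1]
    rw [this]
    have : 0 < ε * (t - s) := by
      apply mul_pos hε; rw [← h]; simpa using ht
    linarith
  · have h1 : 0 < ρ s := classK_pos hρ h
    have h2 : 0 ≤ ε * (t - s) := mul_nonneg hε.le (by linarith [hs.2])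
    linarith

lemma psi_mono_lip {s t : ℝ} (hs : 0 ≤ s) (hst : s ≤ t) :
    Psi ε ρ s ≤ Psi ε ρ t ∧ Psi ε ρ t ≤ Psi ε ρ s + ε * (t - s) := by
  have ht : 0 ≤ t := hs.trans hst
  constructor
  · apply le_csInf (psi_nonempty hρ hε ht)
    rintro b ⟨u, hu, rfl⟩
    beta_reduce
    rcases le_total u s with h | h
    · have h1 : Psi ε ρ s ≤ ρ u + ε * (s - u) :=
        csInf_le (psi_bddBelow hρ hε hs).bddBelow (Set.mem_image_of_mem _ ⟨hu.1, h⟩)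
      have : ε * (s - u) ≤ ε * (t - u) := by
        apply mul_le_mul_of_nonneg_left (by linarith) hε.le
      linarith
    · have h1 : Psi ε ρ s ≤ ρ s := psi_le_rho hρ hε hs
      have h2 : ρ s ≤ ρ u := classK_mono hρ hs (hs.trans h) h
      have h3 : 0 ≤ ε * (t - u) := mul_nonneg hε.le (by linarith [hu.2])
      linarith
  · have : Psi ε ρ t - ε * (t - s) ≤ Psi ε ρ s := by
      apply le_csInf (psi_nonempty hρ hε hs)
      rintro b ⟨u, hu, rfl⟩
      beta_reduce
      have h1 : Psi ε ρ t ≤ ρ u + ε * (t - u) :=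
        csInf_le (psi_bddBelow hρ hε ht).bddBelow
          (Set.mem_image_of_mem _ ⟨hu.1, hu.2.trans hst⟩)
      have : ε * (t - u) = ε * (s - u) + ε * (t - s) := by ring
      linarith
    linarith

lemma psi_contOn : ContinuousOn (Psi ε ρ) (Set.Ici 0) := by
  apply LipschitzOnWith.continuousOn (K := ε.toNNReal)
  apply LipschitzOnWith.of_dist_le_mul
  intro x hx y hy
  have hcoe : (ε.toNNReal : ℝ) = ε := Real.coe_toNNReal ε hε.le
  rw [hcoe, Real.dist_eq, Real.dist_eq]
  rcases le_total x y with h | h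
  · obtain ⟨h1, h2⟩ := psi_mono_lip hρ hε hx h
    rw [abs_of_nonpos (by linarith), abs_of_nonpos (by linarith)]
    nlinarith
  · obtain ⟨h1, h2⟩ := psi_mono_lip hρ hε hy h
    rw [abs_of_nonneg (by linarith), abs_of_nonneg (by linarith)]
    nlinarith

end PsiFacts

/-- integrand for the rescaling function -/
def gfun (c ε : ℝ) (ρ : ℝ → ℝ) (r : ℝ) : ℝ := c * max (ρ r)⁻¹ (ε * r)⁻¹

def Lfun (c ε : ℝ) (ρ : ℝ → ℝ) (v : ℝ) : ℝ := ∫ r in (1:ℝ)..v, gfun c ε ρ r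

def phi (c ε : ℝ) (ρ : ℝ → ℝ) (v : ℝ) : ℝ :=
  if v ≤ 0 then 0 else Real.exp (Lfun c ε ρ v)

section PhiFacts
variable (hρ : IsClassK ρ) (hε : 0 < ε) (hc : 0 < c)
include hρ hε hc

lemma g_pos {r : ℝ} (hr : 0 < r) : 0 < gfun c ε ρ r := by
  have h1 : 0 < (ε * r)⁻¹ := by positivity
  exact lt_of_lt_of_le (by positivity)
    (mul_le_mul_of_nonneg_left (le_max_right _ _) hc.le)

lemma g_contOn : ContinuousOn (gfun c ε ρ) (Set.Ioi 0) := by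
  apply continuousOn_const.mul
  exact ContinuousOn.sup
    (show ContinuousOn (fun r => (ρ r)⁻¹) (Set.Ioi 0) from
      (hρ.1.mono Set.Ioi_subset_Ici_self).inv₀
        (fun x hx => (classK_pos hρ (Set.mem_Ioi.mp hx)).ne'))
    ((continuous_const.mul continuous_id).continuousOn.inv₀
      (fun x hx => (mul_pos hε hx).ne'))

lemma g_intble {a b : ℝ} (ha : 0 < a) (hb : 0 < b) :
    IntervalIntegrable (gfun c ε ρ) volume a b := by
  apply ContinuousOn.intervalIntegrable
  apply (g_contOn hρ hε hc).mono
  intro x hx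
  exact lt_of_lt_of_le (lt_min ha hb) hx.1

lemma hasDerivAt_L {v : ℝ} (hv : 0 < v) : HasDerivAt (Lfun c ε ρ) (gfun c ε ρ v) v := by
  apply intervalIntegral.integral_hasDerivAt_right (g_intble hρ hε hc one_pos hv)
  · exact (g_contOn hρ hε hc).stronglyMeasurableAtFilter isOpen_Ioi v (by exact hv)
  · exact (g_contOn hρ hε hc).continuousAt (Ioi_mem_nhds hv)

lemma L_sub {u v : ℝ} (hu : 0 < u) (hv : 0 < v) :
    Lfun c ε ρ v - Lfun c ε ρ u = ∫ r in u..v, gfun c ε ρ r :=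
  intervalIntegral.integral_interval_sub_left (g_intble hρ hε hc one_pos hv)
    (g_intble hρ hε hc one_pos hu)

omit hρ hε hc in
lemma phi_pos_eq {v : ℝ} (hv : 0 < v) : phi c ε ρ v = Real.exp (Lfun c ε ρ v) := by
  simp [phi, not_le.2 hv]

omit hρ hε hc in
lemma phi_zero : phi c ε ρ 0 = 0 := by simp [phi]

omit hρ hε hc in
lemma phi_nonneg (v : ℝ) : 0 ≤ phi c ε ρ v := by
  by_cases h : v ≤ 0 <;> simp [phi, h, Real.exp_nonneg]

omit hρ hε hc in
lemma phi_pos {v : ℝ} (hv : 0 < v) : 0 < phi c ε ρ v := by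
  rw [phi_pos_eq hv]; exact Real.exp_pos _

lemma phi_strictMonoOn : StrictMonoOn (phi c ε ρ) (Set.Ici 0) := by
  intro u hu v hv huv
  rcases eq_or_lt_of_le (Set.mem_Ici.mp hu) with h | h
  · rw [← h, phi_zero]; exact phi_pos (by linarith)
  · have hv0 : 0 < v := lt_trans h huv
    rw [phi_pos_eq h, phi_pos_eq hv0]
    apply Real.exp_lt_exp.2
    have : 0 < Lfun c ε ρ v - Lfun c ε ρ u := by
      rw [L_sub hρ hε hc h hv0]
      apply intervalIntegral.intervalIntegral_pos_of_pos_on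
        (g_intble hρ hε hc h hv0)
        (fun x hx => g_pos hρ hε hc (lt_trans h hx.1)) huv
    linarith

lemma phi_monoOn : MonotoneOn (phi c ε ρ) (Set.Ici 0) :=
  (phi_strictMonoOn hρ hε hc).monotoneOn

lemma lin_int {a b : ℝ} (ha : 0 < a) (hb : 0 < b) :
    ∫ r in a..b, c * (ε * r)⁻¹ = (c / ε) * Real.log (b / a) := by
  have heq : (fun r : ℝ => c * (ε * r)⁻¹) = fun r : ℝ => (c / ε) * r⁻¹ := by
    funext r; rw [mul_inv]; ring
  rw [heq, intervalIntegral.integral_const_mul, integral_inv_of_pos ha hb]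

lemma L_ge_log {v : ℝ} (hv : 1 ≤ v) : (c / ε) * Real.log v ≤ Lfun c ε ρ v := by
  have h0 : (0:ℝ) < 1 := one_pos
  have hv0 : 0 < v := lt_of_lt_of_le h0 hv
  have h1 : ∫ r in (1:ℝ)..v, c * (ε * r)⁻¹ ≤ Lfun c ε ρ v := by
    apply intervalIntegral.integral_mono_on hv
    · apply ContinuousOn.intervalIntegrable
      apply (continuousOn_const.mul ((continuous_const.mul continuous_id).continuousOn.inv₀
        (fun x hx => ?_))).mono (fun x hx => hx)
      exact (mul_pos hε (lt_of_lt_of_le (lt_min one_pos hv0) hx.1)).ne'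
    · exact g_intble hρ hε hc one_pos hv0
    · intro x hx
      exact mul_le_mul_of_nonneg_left (le_max_right _ _) hc.le
  rw [lin_int hρ hε hc one_pos hv0] at h1
  simpa using h1

lemma L_le_log {v : ℝ} (hv0 : 0 < v) (hv : v ≤ 1) :
    Lfun c ε ρ v ≤ (c / ε) * Real.log v := by
  have h1 : ∫ r in v..(1:ℝ), c * (ε * r)⁻¹ ≤ ∫ r in v..(1:ℝ), gfun c ε ρ r := by
    apply intervalIntegral.integral_mono_on hv
    · apply ContinuousOn.intervalIntegrable
      apply (continuousOn_const.mul ((continuous_const.mul continuous_id).continuousOn.inv₀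
        (fun x hx => ?_))).mono (fun x hx => hx)
      exact (mul_pos hε (lt_of_lt_of_le (lt_min hv0 one_pos) hx.1)).ne'
    · exact g_intble hρ hε hc hv0 one_pos
    · intro x hx
      exact mul_le_mul_of_nonneg_left (le_max_right _ _) hc.le
  rw [lin_int hρ hε hc hv0 one_pos] at h1
  have h2 : Lfun c ε ρ 1 - Lfun c ε ρ v = ∫ r in v..(1:ℝ), gfun c ε ρ r :=
    L_sub hρ hε hc hv0 one_pos
  have h3 : Lfun c ε ρ 1 = 0 := intervalIntegral.integral_same
  have h4 : Real.log (1 / v) = - Real.log v := by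
    rw [one_div, Real.log_inv]
  rw [h4] at h1
  nlinarith [h1, h2, h3]

lemma phi_le_rpow {v : ℝ} (hv0 : 0 < v) (hv : v ≤ 1) :
    phi c ε ρ v ≤ v ^ (c / ε) := by
  rw [phi_pos_eq hv0, Real.rpow_def_of_pos hv0]
  apply Real.exp_le_exp.2
  rw [mul_comm]
  exact L_le_log hρ hε hc hv0 hv

lemma phi_contOn : ContinuousOn (phi c ε ρ) (Set.Ici 0) := by
  intro v hv
  rcases eq_or_lt_of_le (Set.mem_Ici.mp hv) with h | h
  · rw [← h]
    have h0 : phi c ε ρ 0 = 0 := phi_zero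
    rw [ContinuousWithinAt, h0]
    have hup : Tendsto (fun w : ℝ => w ^ (c / ε)) (nhdsWithin 0 (Set.Ici 0)) (nhds 0) := by
      have hc' : ContinuousAt (fun w : ℝ => w ^ (c / ε)) 0 :=
        Real.continuousAt_rpow_const 0 (c/ε) (Or.inr (by positivity))
      have : (0:ℝ) ^ (c / ε) = 0 := Real.zero_rpow (by positivity)
      simpa [this] using hc'.continuousWithinAt.tendsto
    apply squeeze_zero' ?_ ?_ hup
    · filter_upwards [eventually_mem_nhdsWithin] with w hw
      exact phi_nonneg w
    · have h1 : ∀ᶠ w in nhdsWithin (0:ℝ) (Set.Ici 0), w < 1 := by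
        apply eventually_nhdsWithin_of_eventually_nhds
        exact Iio_mem_nhds one_pos
      filter_upwards [h1, eventually_mem_nhdsWithin] with w hw1 hw2
      rcases eq_or_lt_of_le (Set.mem_Ici.mp hw2) with h' | h'
      · rw [← h', phi_zero, Real.zero_rpow (by positivity)]
      · exact phi_le_rpow hρ hε hc h' hw1.le
  · apply ContinuousAt.continuousWithinAt
    have hL : ContinuousAt (fun w => Real.exp (Lfun c ε ρ w)) v :=
      Real.continuous_exp.continuousAt.comp (hasDerivAt_L hρ hε hc h).continuousAt
    apply hL.congr
    filter_upwards [Ioi_mem_nhds h] with w hw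
    exact (phi_pos_eq hw).symm

lemma phi_unbounded (M : ℝ) : ∃ r : ℝ, 0 ≤ r ∧ M ≤ phi c ε ρ r := by
  set K := Real.log (max M 1) with hK
  have hK0 : 0 ≤ K := Real.log_nonneg (le_max_right _ _)
  set r := Real.exp ((ε / c) * K) with hr
  have hr1 : 1 ≤ r := Real.one_le_exp (by positivity)
  have hr0 : 0 < r := lt_of_lt_of_le one_pos hr1
  refine ⟨r, hr0.le, ?_⟩
  have h1 : (c / ε) * Real.log r ≤ Lfun c ε ρ r := L_ge_log hρ hε hc hr1
  have h2 : Real.log r = (ε / c) * K := by rw [hr, Real.log_exp]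
  have h3 : (c / ε) * ((ε / c) * K) = K := by field_simp
  rw [h2, h3] at h1
  rw [phi_pos_eq hr0]
  calc M ≤ max M 1 := le_max_left _ _
    _ = Real.exp K :=
        (Real.exp_log (lt_of_lt_of_le one_pos (le_max_right _ _))).symm
    _ ≤ Real.exp (Lfun c ε ρ r) := Real.exp_le_exp.2 h1

lemma phi_deriv {v : ℝ} (hv : 0 < v) :
    HasDerivAt (phi c ε ρ) (gfun c ε ρ v * Real.exp (Lfun c ε ρ v)) v := by
  have h1 : HasDerivAt (fun w => Real.exp (Lfun c ε ρ w))
      (Real.exp (Lfun c ε ρ v) * gfun c ε ρ v) v := (hasDerivAt_L hρ hε hc hv).exp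
  rw [mul_comm] at h1
  apply h1.congr_of_eventuallyEq
  filter_upwards [Ioi_mem_nhds hv] with w hw
  exact phi_pos_eq hw

lemma phi'_contOn : ContinuousOn (fun t => gfun c ε ρ t * Real.exp (Lfun c ε ρ t))
    (Set.Ioi 0) := by
  apply (g_contOn hρ hε hc).mul
  intro t ht
  exact (Real.continuous_exp.continuousAt.comp
    (hasDerivAt_L hρ hε hc ht).continuousAt).continuousWithinAt

omit hρ hε hc in
lemma phi'_intble (hρ : IsClassK ρ) (hε : 0 < ε) (hc : 0 < c) {a b : ℝ}
    (ha : 0 < a) (hb : 0 < b) :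
    IntervalIntegrable (fun t => gfun c ε ρ t * Real.exp (Lfun c ε ρ t)) volume a b := by
  apply ContinuousOn.intervalIntegrable
  apply (phi'_contOn hρ hε hc).mono
  intro x hx
  exact lt_of_lt_of_le (lt_min ha hb) hx.1

lemma phi_sub_lower {a u v : ℝ} (ha : 0 < a) (hau : a ≤ u) (huv : u ≤ v) :
    c * phi c ε ρ a / ρ v * (v - u) ≤ phi c ε ρ v - phi c ε ρ u := by
  have hu0 : 0 < u := lt_of_lt_of_le ha hau
  have hv0 : 0 < v := lt_of_lt_of_le hu0 huv
  have hFTC : ∫ t in u..v, gfun c ε ρ t * Real.exp (Lfun c ε ρ t)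
      = phi c ε ρ v - phi c ε ρ u := by
    apply intervalIntegral.integral_eq_sub_of_hasDerivAt
    · intro t ht
      rw [Set.uIcc_of_le huv] at ht
      exact phi_deriv hρ hε hc (lt_of_lt_of_le hu0 ht.1)
    · exact phi'_intble hρ hε hc hu0 hv0
  rw [← hFTC]
  set mm := c * phi c ε ρ a / ρ v with hmm
  have h1 : ∫ t in u..v, mm = (v - u) * mm := by
    rw [intervalIntegral.integral_const]; simp [smul_eq_mul]
  have h2 : ∫ t in u..v, mm ≤ ∫ t in u..v, gfun c ε ρ t * Real.exp (Lfun c ε ρ t) := by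
    apply intervalIntegral.integral_mono_on huv intervalIntegrable_const
      (phi'_intble hρ hε hc hu0 hv0)
    intro t ht
    have ht0 : 0 < t := lt_of_lt_of_le hu0 ht.1
    have hρt : 0 < ρ t := classK_pos hρ ht0
    have hρv : 0 < ρ v := classK_pos hρ hv0
    have hstep1 : mm ≤ c * phi c ε ρ t / ρ t := by
      rw [hmm]
      apply div_le_div₀ (mul_nonneg hc.le (phi_nonneg _))
        (mul_le_mul_of_nonneg_left
          (phi_monoOn hρ hε hc (le_of_lt ha) (by exact (ha.trans_le (hau.trans ht.1)).le)
            (hau.trans ht.1)) hc.le) hρt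
        (classK_mono hρ ht0.le hv0.le ht.2)
    have hstep2 : c * phi c ε ρ t / ρ t ≤ gfun c ε ρ t * Real.exp (Lfun c ε ρ t) := by
      rw [phi_pos_eq ht0, gfun]
      rw [div_eq_mul_inv, mul_comm (c * Real.exp (Lfun c ε ρ t)) (ρ t)⁻¹,
        ← mul_assoc]
      apply mul_le_mul_of_nonneg_right _ (Real.exp_nonneg _)
      calc (ρ t)⁻¹ * c = c * (ρ t)⁻¹ := mul_comm _ _
        _ ≤ c * max (ρ t)⁻¹ (ε * t)⁻¹ :=
            mul_le_mul_of_nonneg_left (le_max_left _ _) hc.le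
    exact hstep1.trans hstep2
  rw [h1] at h2
  calc mm * (v - u) = (v - u) * mm := mul_comm _ _
    _ ≤ _ := h2

lemma L_monoOn {u v : ℝ} (hu : 0 < u) (huv : u ≤ v) : Lfun c ε ρ u ≤ Lfun c ε ρ v := by
  have hv : 0 < v := lt_of_lt_of_le hu huv
  have h := L_sub hρ hε hc hu hv
  have h2 : 0 ≤ ∫ r in u..v, gfun c ε ρ r := by
    apply intervalIntegral.integral_nonneg huv
    intro x hx
    exact (g_pos hρ hε hc (lt_of_lt_of_le hu hx.1)).le
  linarith

lemma phi_lipschitzOn {a b : ℝ} (ha : 0 < a) :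
    LipschitzOnWith (c * max (ρ a)⁻¹ (ε * a)⁻¹ * Real.exp (Lfun c ε ρ b)).toNNReal
      (phi c ε ρ) (Set.Icc a b) := by
  set C := c * max (ρ a)⁻¹ (ε * a)⁻¹ * Real.exp (Lfun c ε ρ b) with hC
  apply Convex.lipschitzOnWith_of_nnnorm_hasDerivWithin_le (convex_Icc a b)
    (f' := fun t => gfun c ε ρ t * Real.exp (Lfun c ε ρ t))
  · intro t ht
    exact (phi_deriv hρ hε hc (lt_of_lt_of_le ha ht.1)).hasDerivWithinAt
  · intro t ht
    have ht0 : 0 < t := lt_of_lt_of_le ha ht.1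
    have hy0 : 0 ≤ gfun c ε ρ t * Real.exp (Lfun c ε ρ t) :=
      mul_nonneg (g_pos hρ hε hc ht0).le (Real.exp_nonneg _)
    have hyC : gfun c ε ρ t * Real.exp (Lfun c ε ρ t) ≤ C := by
      rw [hC]
      apply mul_le_mul
      · rw [gfun]
        apply mul_le_mul_of_nonneg_left _ hc.le
        apply max_le_max
        · exact inv_anti₀ (classK_pos hρ ha) (classK_mono hρ ha.le ht0.le ht.1)
        · exact inv_anti₀ (by positivity)
            (mul_le_mul_of_nonneg_left ht.1 hε.le)
      · exact Real.exp_le_exp.2 (L_monoOn hρ hε hc ht0 ht.2)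
      · exact Real.exp_nonneg _
      · rw [← gfun]; exact (g_pos hρ hε hc ha).le
    rw [← NNReal.coe_le_coe, coe_nnnorm, Real.coe_toNNReal', Real.norm_eq_abs,
      abs_of_nonneg hy0]
    exact le_max_of_le_left hyC

lemma phi_chi {χ : ℝ → ℝ} {τstar A : ℝ}
    (hχK : IsClassKInf χ)
    (hsup : ∀ s : ℝ, 0 < s → (∫ r in s..(χ s), (Psi ε ρ r)⁻¹) ≤ τstar)
    (hcτ : c * τstar ≤ A) (hA : 0 ≤ A) :
    ∀ v : ℝ, 0 ≤ v → phi c ε ρ (χ v) ≤ Real.exp A * phi c ε ρ v := by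
  intro v hv
  rcases eq_or_lt_of_le hv with h0 | h0
  · rw [← h0, hχK.1.2.1, phi_zero]
    simp
  · have hχv : 0 < χ v := by
      have := hχK.1.2.2 (le_refl (0:ℝ)) h0.le h0
      rwa [hχK.1.2.1] at this
    rcases le_or_gt (χ v) v with hle | hlt
    · calc phi c ε ρ (χ v) ≤ phi c ε ρ v :=
            phi_monoOn hρ hε hc hχv.le h0.le hle
        _ ≤ Real.exp A * phi c ε ρ v := by
            nlinarith [Real.one_le_exp hA, phi_nonneg (c := c) (ε := ε) (ρ := ρ) v]
    · -- v < χ v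
      have hIg : IntervalIntegrable (gfun c ε ρ) volume v (χ v) := g_intble hρ hε hc h0 hχv
      have hIp : IntervalIntegrable (fun r => c * (Psi ε ρ r)⁻¹) volume v (χ v) := by
        apply ContinuousOn.intervalIntegrable
        apply continuousOn_const.mul
        apply ContinuousOn.inv₀
        · apply (psi_contOn hρ hε).mono
          intro x hx
          rw [Set.uIcc_of_le hlt.le] at hx
          exact le_trans h0.le hx.1
        · intro x hx
          rw [Set.uIcc_of_le hlt.le] at hx
          exact (psi_pos hρ hε (lt_of_lt_of_le h0 hx.1)).ne'
      have hmono : ∫ r in v..(χ v), gfun c ε ρ r ≤ ∫ r in v..(χ v), c * (Psi ε ρ r)⁻¹ := by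
        apply intervalIntegral.integral_mono_on hlt.le hIg hIp
        intro r hr
        have hr0 : 0 < r := lt_of_lt_of_le h0 hr.1
        have hP : 0 < Psi ε ρ r := psi_pos hρ hε hr0
        rw [gfun]
        apply mul_le_mul_of_nonneg_left _ hc.le
        apply max_le
        · exact inv_anti₀ hP (psi_le_rho hρ hε hr0.le)
        · exact inv_anti₀ hP (psi_le_lin hρ hε hr0.le)
      have hint : ∫ r in v..(χ v), c * (Psi ε ρ r)⁻¹ ≤ c * τstar := by
        rw [intervalIntegral.integral_const_mul]
        exact mul_le_mul_of_nonneg_left (hsup v h0) hc.le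
      have hLsub : Lfun c ε ρ (χ v) - Lfun c ε ρ v = ∫ r in v..(χ v), gfun c ε ρ r :=
        L_sub hρ hε hc h0 hχv
      rw [phi_pos_eq hχv, phi_pos_eq h0, ← Real.exp_add]
      apply Real.exp_le_exp.2
      linarith

lemma phi_contAt {v : ℝ} (hv : 0 < v) : ContinuousAt (phi c ε ρ) v := by
  have hL : ContinuousAt (fun w => Real.exp (Lfun c ε ρ w)) v :=
    Real.continuous_exp.continuousAt.comp (hasDerivAt_L hρ hε hc hv).continuousAt
  apply hL.congr
  filter_upwards [Ioi_mem_nhds hv] with w hw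
  exact (phi_pos_eq hw).symm

lemma limsup_chain {q : ℝ → ℝ} {v₀ : ℝ} (hv₀ : 0 < v₀)
    (hq : Tendsto q (nhdsWithin 0 (Set.Ioi 0)) (nhds v₀))
    (hlim : Filter.limsup (fun h : ℝ => (((q h - v₀) / h : ℝ) : EReal))
      (nhdsWithin 0 (Set.Ioi 0)) ≤ ((-(ρ v₀) : ℝ) : EReal)) :
    Filter.limsup (fun h : ℝ => (((phi c ε ρ (q h) - phi c ε ρ v₀) / h : ℝ) : EReal))
      (nhdsWithin 0 (Set.Ioi 0)) ≤ ((-(c * phi c ε ρ v₀) : ℝ) : EReal) := by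
  set l := nhdsWithin (0:ℝ) (Set.Ioi 0) with hl
  set R := ρ v₀ with hRdef
  have hR : 0 < R := classK_pos hρ hv₀
  suffices H : ∀ c' : ℝ, -(c * phi c ε ρ v₀) < c' →
      Filter.limsup (fun h : ℝ => (((phi c ε ρ (q h) - phi c ε ρ v₀) / h : ℝ) : EReal)) l
        ≤ (c' : EReal) by
    by_contra hcon
    push_neg at hcon
    obtain ⟨z, hz1, hz2⟩ := EReal.exists_between_coe_real hcon
    have hz1' : -(c * phi c ε ρ v₀) < z := by exact_mod_cast hz1
    exact absurd (H z hz1') (not_le.2 hz2)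
  intro c' hc'
  set d := c' + c * phi c ε ρ v₀ with hd
  have hd0 : 0 < d := by rw [hd]; linarith
  -- choose δ via continuity of phi at v₀
  have hcont : ContinuousAt (phi c ε ρ) v₀ := phi_contAt hρ hε hc hv₀
  have hdc : 0 < d / (2 * c) := by positivity
  obtain ⟨δ₁, hδ₁0, hδ₁⟩ := Metric.continuousAt_iff.mp hcont (d / (2 * c)) hdc
  set δ := min (δ₁ / 2) (v₀ / 2) with hδdef
  have hδ0 : 0 < δ := lt_min (by linarith) (by linarith)
  set a := v₀ - δ with hadef
  have ha : 0 < a := by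
    have : δ ≤ v₀ / 2 := min_le_right _ _
    rw [hadef]; linarith
  have hphia : c * phi c ε ρ v₀ - c * phi c ε ρ a < d / 2 := by
    have hdist : dist a v₀ < δ₁ := by
      rw [Real.dist_eq, hadef]
      have h1 : δ ≤ δ₁ / 2 := min_le_left _ _
      rw [abs_of_nonpos (by linarith)]
      simp only [neg_sub]
      linarith
    have := hδ₁ hdist
    rw [Real.dist_eq] at this
    have h2 : phi c ε ρ v₀ - phi c ε ρ a ≤ |phi c ε ρ a - phi c ε ρ v₀| := by
      rw [abs_sub_comm]; exact le_abs_self _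
    have h3 : phi c ε ρ v₀ - phi c ε ρ a < d / (2 * c) := lt_of_le_of_lt h2 this
    calc c * phi c ε ρ v₀ - c * phi c ε ρ a = c * (phi c ε ρ v₀ - phi c ε ρ a) := by ring
      _ < c * (d / (2 * c)) := by exact mul_lt_mul_of_pos_left h3 hc
      _ = d / 2 := by field_simp
  set mm := c * phi c ε ρ a / R with hmdef
  have hm0 : 0 < mm := div_pos (mul_pos hc (phi_pos ha)) hR
  set η := min (d / (2 * mm)) (R / 2) with hηdef
  have hη0 : 0 < η := lt_min (by positivity) (by linarith)
  -- eventualities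
  have E1 : ∀ᶠ h in l, (((q h - v₀) / h : ℝ) : EReal) < ((-R + η : ℝ) : EReal) := by
    refine Filter.eventually_lt_of_limsup_lt (lt_of_le_of_lt hlim ?_) (by isBoundedDefault)
    exact_mod_cast (by linarith : -R < -R + η)
  have E2 : ∀ᶠ h in l, |q h - v₀| < δ := by
    have := Metric.tendsto_nhds.mp hq δ hδ0
    filter_upwards [this] with h hh
    rwa [Real.dist_eq] at hh
  have E3 : ∀ᶠ h in l, (0:ℝ) < h := eventually_mem_nhdsWithin
  have key : ∀ᶠ h in l,
      (((phi c ε ρ (q h) - phi c ε ρ v₀) / h : ℝ) : EReal) ≤ (c' : EReal) := by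
    filter_upwards [E1, E2, E3] with h h1 h2 h3
    have h1' : (q h - v₀) / h < -R + η := by exact_mod_cast h1
    rw [EReal.coe_le_coe_iff]
    have hqlt : q h - v₀ < (-R + η) * h := (div_lt_iff₀ h3).mp h1'
    have hηR : -R + η ≤ -R / 2 := by
      have : η ≤ R / 2 := min_le_right _ _
      linarith
    have hqv : q h < v₀ := by
      have hnp : (-R + η) * h ≤ 0 :=
        mul_nonpos_of_nonpos_of_nonneg (by linarith) h3.le
      linarith
    have hqa : a ≤ q h := by
      have := abs_lt.mp h2
      rw [hadef]; linarith [this.1]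
    have key1 : mm * (v₀ - q h) ≤ phi c ε ρ v₀ - phi c ε ρ (q h) := by
      rw [hmdef, hRdef]
      exact phi_sub_lower hρ hε hc ha hqa hqv.le
    have key2 : mm * (q h - v₀) = -(mm * (v₀ - q h)) := by ring
    have key3 : phi c ε ρ (q h) - phi c ε ρ v₀ ≤ mm * (q h - v₀) := by linarith
    have key4 : (phi c ε ρ (q h) - phi c ε ρ v₀) / h ≤ (mm * (q h - v₀)) / h :=
      (div_le_div_iff_of_pos_right h3).mpr key3
    have key5 : (mm * (q h - v₀)) / h = mm * ((q h - v₀) / h) := mul_div_assoc _ _ _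
    have key6 : mm * ((q h - v₀) / h) ≤ mm * (-R + η) :=
      mul_le_mul_of_nonneg_left h1'.le hm0.le
    have e1 : mm * R = c * phi c ε ρ a := by
      rw [hmdef]; field_simp
    have e2 : mm * η ≤ d / 2 := by
      calc mm * η ≤ mm * (d / (2 * mm)) :=
            mul_le_mul_of_nonneg_left (min_le_left _ _) hm0.le
        _ = d / 2 := by field_simp
    have e3 : mm * (-R + η) = -(mm * R) + mm * η := by ring
    have final : mm * (-R + η) ≤ c' := by
      rw [e3, e1]
      linarith
    linarith [key4, key5 ▸ key6]
  exact Filter.limsup_le_of_le (by isBoundedDefault) key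

end PhiFacts
end
end NL2L


section MainProof
open Filter Set NL2L

lemma phi_classKInf_comp {ρ : ℝ → ℝ} {c ε : ℝ} (hρ : IsClassK ρ) (hε : 0 < ε)
    (hc : 0 < c) {β : ℝ → ℝ} (hβ : IsClassKInf β) :
    IsClassKInf (fun s => NL2L.phi c ε ρ (β s)) := by
  have hβ0 : ∀ s ∈ Set.Ici (0:ℝ), 0 ≤ β s := by
    intro s hs
    have := hβ.1.2.2.monotoneOn (Set.self_mem_Ici) hs hs
    rwa [hβ.1.2.1] at this
  refine ⟨⟨?_, ?_, ?_⟩, ?_⟩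
  · exact (NL2L.phi_contOn hρ hε hc).comp hβ.1.1 (fun s hs => hβ0 s hs)
  · simp only [hβ.1.2.1, NL2L.phi_zero]
  · intro s hs t ht hst
    exact NL2L.phi_strictMonoOn hρ hε hc (hβ0 s hs) (hβ0 t ht) (hβ.1.2.2 hs ht hst)
  · intro M
    obtain ⟨r1, hr1, hMr1⟩ := NL2L.phi_unbounded hρ hε hc M
    obtain ⟨r2, hr2, hr12⟩ := hβ.2 r1
    exact ⟨r2, hr2, hMr1.trans (NL2L.phi_monoOn hρ hε hc (Set.mem_Ici.mpr hr1)
      (Set.mem_Ici.mpr (hr1.trans hr12)) hr12)⟩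

end MainProof

/-- From the nonlinear Lyapunov conditions with finite `τ*` one obtains, for every
`τ > τ*`, "linearized" multiple Lyapunov functions `W_i`. -/
theorem nonlinear_to_linearized_lyapunov {m n : ℕ}
    (f : Fin m → EuclideanSpace ℝ (Fin n) → EuclideanSpace ℝ (Fin n))
    (F : WellPosed f)
    (V : Fin m → EuclideanSpace ℝ (Fin n) → ℝ) (α₁ α₂ ρfun χ : ℝ → ℝ) (ε τstar : ℝ)
    (hV : ∀ i, Lip0 (V i)) (hα₁ : IsClassKInf α₁) (hα₂ : IsClassKInf α₂)
    (hρ : IsClassK ρfun) (hχ : IsClassKInf χ) (hε : 0 < ε)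
    (hsand : ∀ i x, α₁ ‖x‖ ≤ V i x ∧ V i x ≤ α₂ ‖x‖)
    (hdec : ∀ i x, dini (F.Φ i) (V i) x ≤ ((-(ρfun (V i x)) : ℝ) : EReal))
    (hjump : ∀ i j x, V i x ≤ χ (V j x))
    (hsup : ∀ s : ℝ, 0 < s → (∫ r in s..(χ s), (Psi ε ρfun r)⁻¹) ≤ τstar) :
    ∀ τ : ℝ, τstar < τ →
      ∃ (W : Fin m → EuclideanSpace ℝ (Fin n) → ℝ) (a₁ a₂ : ℝ → ℝ) (α : ℝ),
        (∀ i, Lip0 (W i)) ∧ IsClassKInf a₁ ∧ IsClassKInf a₂ ∧ 0 ≤ α ∧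
        (∀ i x, a₁ ‖x‖ ≤ W i x ∧ W i x ≤ a₂ ‖x‖) ∧
        (∀ i x, dini (F.Φ i) (W i) x ≤ ((-((1 + α) * W i x) : ℝ) : EReal)) ∧
        (∀ i j x, W i x ≤ Real.exp (α * τ) * W j x) := by
  intro τ hτ
  classical
  have hα : ∃ α : ℝ, 0 ≤ α ∧ (1 + α) * τstar ≤ α * τ ∧ 0 ≤ α * τ := by
    by_cases hts : τstar ≤ 0
    · refine ⟨0, le_refl _, ?_, by simp⟩
      simpa using hts
    · push_neg at hts
      have hτ0 : 0 < τ := lt_trans hts hτ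
      have hd : 0 < τ - τstar := by linarith
      refine ⟨τstar / (τ - τstar), (div_pos hts hd).le, le_of_eq ?_,
        (mul_nonneg (div_pos hts hd).le hτ0.le)⟩
      field_simp
      ring
  obtain ⟨α, hα0, hαkey, hατ⟩ := hα
  set c := 1 + α with hcdef
  have hc : 0 < c := by rw [hcdef]; linarith
  have hVpos : ∀ (i : Fin m) (x : EuclideanSpace ℝ (Fin n)), x ≠ 0 → 0 < V i x := by
    intro i x hx
    have hn : 0 < ‖x‖ := norm_pos_iff.mpr hx
    have h1 : (0:ℝ) < α₁ ‖x‖ := by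
      have := hα₁.1.2.2 (Set.self_mem_Ici) (Set.mem_Ici.mpr hn.le) hn
      rwa [hα₁.1.2.1] at this
    linarith [(hsand i x).1]
  have hVnonneg : ∀ (i : Fin m) (x : EuclideanSpace ℝ (Fin n)), 0 ≤ V i x := by
    intro i x
    exact (NL2L.classK_nonneg hα₁.1 (norm_nonneg x)).trans (hsand i x).1
  have hVcont : ∀ (i : Fin m) (x : EuclideanSpace ℝ (Fin n)), x ≠ 0 →
      ContinuousAt (V i) x := by
    intro i x hx
    obtain ⟨K, s, hs, hlip⟩ := hV i x hx
    exact (hlip.continuousOn.continuousWithinAt (mem_of_mem_nhds hs)).continuousAt hs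
  refine ⟨fun i x => NL2L.phi c ε ρfun (V i x),
    fun s => NL2L.phi c ε ρfun (α₁ s), fun s => NL2L.phi c ε ρfun (α₂ s), α,
    ?_, ?_, ?_, hα0, ?_, ?_, ?_⟩
  · -- Lip0
    intro i x hx
    obtain ⟨K, s, hs, hlip⟩ := hV i x hx
    have hv₀ : 0 < V i x := hVpos i x hx
    have ha : 0 < V i x / 2 := by linarith
    have hIoo : Set.Ioo (V i x / 2) (V i x + 1) ∈ nhds (V i x) :=
      Ioo_mem_nhds (by linarith) (by linarith)
    have hpre : (V i) ⁻¹' (Set.Ioo (V i x / 2) (V i x + 1)) ∈ nhds x :=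
      (hVcont i x hx).preimage_mem_nhds hIoo
    have hcomp := (NL2L.phi_lipschitzOn hρ hε hc (b := V i x + 1) ha).comp
      (hlip.mono (Set.inter_subset_left (t := (V i) ⁻¹' (Set.Ioo (V i x / 2) (V i x + 1)))))
      (fun y hy => Set.Ioo_subset_Icc_self hy.2)
    exact ⟨_, s ∩ (V i) ⁻¹' (Set.Ioo (V i x / 2) (V i x + 1)),
      Filter.inter_mem hs hpre, hcomp⟩
  · exact phi_classKInf_comp hρ hε hc hα₁
  · exact phi_classKInf_comp hρ hε hc hα₂
  · -- sandwich
    intro i x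
    constructor
    · exact NL2L.phi_monoOn hρ hε hc
        (Set.mem_Ici.mpr (NL2L.classK_nonneg hα₁.1 (norm_nonneg x)))
        (Set.mem_Ici.mpr (hVnonneg i x)) (hsand i x).1
    · exact NL2L.phi_monoOn hρ hε hc (Set.mem_Ici.mpr (hVnonneg i x))
        (Set.mem_Ici.mpr ((hVnonneg i x).trans (hsand i x).2)) (hsand i x).2
  · -- dini decrease
    intro i x
    by_cases hx : x = 0
    · subst hx
      have hΦ0 : ∀ h : ℝ, 0 ≤ h → F.Φ i h 0 = 0 := by
        intro h hh
        have hsub : IsSubSolution f i (fun _ => (0 : EuclideanSpace ℝ (Fin n))) := by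
          constructor
          · exact continuousOn_const
          · intro t ht
            have := hasDerivWithinAt_const t (Set.Ici t) (0 : EuclideanSpace ℝ (Fin n))
            simpa [F.zero i] using this
        exact (F.unique i 0 _ hsub rfl h hh).symm
      have hV0 : V i (0 : EuclideanSpace ℝ (Fin n)) = 0 := by
        have h1 := (hsand i 0).2
        rw [norm_zero, hα₂.1.2.1] at h1
        exact le_antisymm h1 (hVnonneg i 0)
      have hEq : (fun h : ℝ => (((NL2L.phi c ε ρfun (V i (F.Φ i h 0)) -
            NL2L.phi c ε ρfun (V i (0 : EuclideanSpace ℝ (Fin n)))) / h : ℝ) : EReal))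
          =ᶠ[nhdsWithin 0 (Set.Ioi 0)] (fun _ => (((0:ℝ)) : EReal)) := by
        filter_upwards [eventually_mem_nhdsWithin] with h hh
        rw [hΦ0 h (le_of_lt hh)]
        simp
      rw [dini, Filter.limsup_congr hEq, Filter.limsup_const]
      simp [hV0, NL2L.phi_zero]
    · have hv₀ : 0 < V i x := hVpos i x hx
      have hq : Filter.Tendsto (fun h => V i (F.Φ i h x)) (nhdsWithin 0 (Set.Ioi 0))
          (nhds (V i x)) := by
        have hΦc : ContinuousWithinAt (fun t => F.Φ i t x) (Set.Ici 0) 0 :=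
          (F.isSol i x).1 0 Set.self_mem_Ici
        have h1 : Filter.Tendsto (fun t => F.Φ i t x) (nhdsWithin 0 (Set.Ici 0)) (nhds x) := by
          have h1' := hΦc
          rw [ContinuousWithinAt, F.init i x] at h1'
          exact h1'
        have h2 : Filter.Tendsto (fun t => F.Φ i t x) (nhdsWithin 0 (Set.Ioi 0)) (nhds x) :=
          h1.mono_left (nhdsWithin_mono 0 Set.Ioi_subset_Ici_self)
        exact (hVcont i x hx).tendsto.comp h2
      exact NL2L.limsup_chain hρ hε hc hv₀ hq (hdec i x)
  · -- jump
    intro i j x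
    have h1 : NL2L.phi c ε ρfun (V i x) ≤ NL2L.phi c ε ρfun (χ (V j x)) :=
      NL2L.phi_monoOn hρ hε hc (Set.mem_Ici.mpr (hVnonneg i x))
        (Set.mem_Ici.mpr ((hVnonneg i x).trans (hjump i j x))) (hjump i j x)
    exact h1.trans (NL2L.phi_chi hρ hε hc hχ hsup hαkey hατ (V j x) (hVnonneg j x))
end

section
/- Let {f_i}_{i∈I} be well-posed and let τ > 0. Suppose there exist W₁,…,W_m ∈ Lip₀(ℝⁿ,ℝ), α̃₁, α̃₂ ∈ K∞ and α ≥ 0 such that for all i, j ∈ I and all x ∈ ℝⁿ: α̃₁(‖x‖) ≤ W_i(x) ≤ α̃₂(‖x‖); D⁺_{f_i}W_i(x) ≤ −(1+α) W_i(x); W_i(x) ≤ e^{ατ} W_j(x). Then there exist 0 ≤ τ* < τ, α₁, α₂ ∈ K∞, ρ ∈ K, χ ∈ K∞, ε > 0 and V₁,…,V_m ∈ Lip₀(ℝⁿ,ℝ) such that for all i, j ∈ I and all x ∈ ℝⁿ: α₁(‖x‖) ≤ V_i(x) ≤ α₂(‖x‖); D⁺_{f_i}V_i(x) ≤ −ρ(V_i(x));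 V_i(x) ≤ χ(V_j(x)); and, with Ψ_ε(t) := min_{s∈[0,t]} { ρ(s) + ε(t−s) }, sup_{s>0} ∫_s^{χ(s)} dr/Ψ_ε(r) = τ* < τ. (In fact one may take V_i = W_i, ρ(s) = (1+α)s, χ(s) = e^{ατ}s, ε = 1+α and τ* = ατ/(1+α).) -/
/-- Conversely, "linearized" multiple Lyapunov functions yield the nonlinear
Lyapunov conditions with `sup_{s>0} ∫_s^{χ(s)} dr/Ψ_ε(r) = τ* < τ`. -/
theorem linearized_to_nonlinear_lyapunov {m n : ℕ}
    (f : Fin m → EuclideanSpace ℝ (Fin n) → EuclideanSpace ℝ (Fin n))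
    (F : WellPosed f) (τ : ℝ) (hτ : 0 < τ)
    (W : Fin m → EuclideanSpace ℝ (Fin n) → ℝ) (a₁ a₂ : ℝ → ℝ) (α : ℝ)
    (hW : ∀ i, Lip0 (W i)) (ha₁ : IsClassKInf a₁) (ha₂ : IsClassKInf a₂) (hα : 0 ≤ α)
    (hsand : ∀ i x, a₁ ‖x‖ ≤ W i x ∧ W i x ≤ a₂ ‖x‖)
    (hdec : ∀ i x, dini (F.Φ i) (W i) x ≤ ((-((1 + α) * W i x) : ℝ) : EReal))
    (hjump : ∀ i j x, W i x ≤ Real.exp (α * τ) * W j x) :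
    ∃ (τstar : ℝ) (V : Fin m → EuclideanSpace ℝ (Fin n) → ℝ)
      (α₁ α₂ ρfun χ : ℝ → ℝ) (ε : ℝ),
      0 ≤ τstar ∧ τstar < τ ∧
      (∀ i, Lip0 (V i)) ∧ IsClassKInf α₁ ∧ IsClassKInf α₂ ∧
      IsClassK ρfun ∧ IsClassKInf χ ∧ 0 < ε ∧
      (∀ i x, α₁ ‖x‖ ≤ V i x ∧ V i x ≤ α₂ ‖x‖) ∧
      (∀ i x, dini (F.Φ i) (V i) x ≤ ((-(ρfun (V i x)) : ℝ) : EReal)) ∧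
      (∀ i j x, V i x ≤ χ (V j x)) ∧
      IsLUB {y : ℝ | ∃ s : ℝ, 0 < s ∧ y = ∫ r in s..(χ s), (Psi ε ρfun r)⁻¹} τstar := by
  have h1α : (0:ℝ) < 1 + α := by linarith
  set c : ℝ := Real.exp (α * τ) with hc
  have hc1 : (1:ℝ) ≤ c := Real.one_le_exp (by positivity)
  have hPsi : ∀ t : ℝ, 0 ≤ t → Psi (1 + α) (fun s => (1 + α) * s) t = (1 + α) * t := by
    intro t ht
    have himg : (fun s => (1 + α) * s + (1 + α) * (t - s)) '' Set.Icc 0 t = {(1 + α) * t} := by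
      have : (fun s => (1 + α) * s + (1 + α) * (t - s)) = fun _ : ℝ => (1 + α) * t := by
        funext s; ring
      rw [this]
      exact Set.Nonempty.image_const (Set.nonempty_Icc.mpr ht) _
    rw [Psi, himg, csInf_singleton]
  have key : ∀ s : ℝ, 0 < s →
      (∫ r in s..(c * s), (Psi (1 + α) (fun u => (1 + α) * u) r)⁻¹) = α * τ / (1 + α) := by
    intro s hs
    have hsc : s ≤ c * s := le_mul_of_one_le_left hs.le hc1
    have hcs : 0 < c * s := lt_of_lt_of_le hs hsc
    have hEq : Set.EqOn (fun r => (Psi (1 + α) (fun u => (1 + α) * u) r)⁻¹)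
        (fun r => (1 + α)⁻¹ * r⁻¹) (Set.uIcc s (c * s)) := by
      intro r hr
      rw [Set.uIcc_of_le hsc] at hr
      have hr0 : 0 ≤ r := le_trans hs.le hr.1
      simp only [hPsi r hr0, mul_inv]
    rw [intervalIntegral.integral_congr hEq]
    rw [intervalIntegral.integral_const_mul]
    have h0 : (0:ℝ) ∉ Set.uIcc s (c * s) := by
      rw [Set.uIcc_of_le hsc]
      intro h
      exact absurd h.1 (not_le.mpr hs)
    rw [integral_inv h0]
    have : c * s / s = c := by field_simp
    rw [this, hc, Real.log_exp]
    rw [inv_mul_eq_div]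
  refine ⟨α * τ / (1 + α), W, a₁, a₂, (fun s => (1 + α) * s), (fun s => c * s), 1 + α,
    by positivity, ?_, hW, ha₁, ha₂, ?_, ?_, h1α, hsand, hdec, hjump, ?_⟩
  · rw [div_lt_iff₀ h1α]; nlinarith
  · refine ⟨(continuous_const.mul continuous_id).continuousOn, by ring, ?_⟩
    intro x _ y _ hxy
    exact mul_lt_mul_of_pos_left hxy h1α
  · have hc0 : (0:ℝ) < c := Real.exp_pos _
    refine ⟨⟨(continuous_const.mul continuous_id).continuousOn, by ring, ?_⟩, ?_⟩
    · intro x _ y _ hxy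
      exact mul_lt_mul_of_pos_left hxy hc0
    · intro M
      refine ⟨max M 0 / c, by positivity, ?_⟩
      show M ≤ c * (max M 0 / c)
      rw [mul_div_cancel₀ _ hc0.ne']
      exact le_max_left M 0
  · constructor
    · rintro y ⟨s, hs, rfl⟩
      exact (key s hs).le
    · intro b hb
      exact hb ⟨1, one_pos, by have := key 1 one_pos; simpa using this.symm⟩
end

section
/- (Quadratic sufficient condition of Hespanha–Morse type.) Let A₁,…,A_m ∈ ℝ^{n×n}, ρ > 0, α > 0 and ν ≥ 1. Suppose there exist symmetric positive definite matrices P₁,…,P_m ∈ ℝ^{n×n} such that for all i, j ∈ I: P_iA_i + A_iᵀP_i + 2(α+ρ)P_i is negative definite, and ν²P_j − P_i is positive semidefinite. Then for every τ ≥ ln(ν)/α the switched linear system ẋ = A_{σ(t)}x is τ-UGEB_ρ. -/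
noncomputable section QuadAuxSection

namespace QuadAux

open Matrix Set Real Metric

variable {n : ℕ}

/-- quadratic form of a matrix on Euclidean space -/
def qf (M : Matrix (Fin n) (Fin n) ℝ) (x : EuclideanSpace ℝ (Fin n)) : ℝ :=
  (WithLp.equiv 2 _ x) ⬝ᵥ (M *ᵥ (WithLp.equiv 2 _ x))

lemma qf_nonneg {M : Matrix (Fin n) (Fin n) ℝ} (h : M.PosSemidef)
    (x : EuclideanSpace ℝ (Fin n)) : 0 ≤ qf M x := by
  simpa [qf] using h.dotProduct_mulVec_nonneg (WithLp.equiv 2 _ x)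

lemma inner_qf (M : Matrix (Fin n) (Fin n) ℝ) (y : EuclideanSpace ℝ (Fin n)) :
    (inner ℝ y (Matrix.toEuclideanLin M y) : ℝ) = qf M y := by
  simp only [EuclideanSpace.inner_eq_star_dotProduct, qf, star_trivial]
  rw [dotProduct_comm]; rfl

lemma inner_qf_mul (P A : Matrix (Fin n) (Fin n) ℝ) (y : EuclideanSpace ℝ (Fin n)) :
    (inner ℝ y (Matrix.toEuclideanLin P (Matrix.toEuclideanLin A y)) : ℝ) = qf (P * A) y := by
  simp only [EuclideanSpace.inner_eq_star_dotProduct, qf, star_trivial]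
  rw [dotProduct_comm, ← Matrix.mulVec_mulVec]; rfl

lemma inner_qf_transpose (P A : Matrix (Fin n) (Fin n) ℝ) (y : EuclideanSpace ℝ (Fin n)) :
    (inner ℝ (Matrix.toEuclideanLin A y) (Matrix.toEuclideanLin P y) : ℝ)
      = qf ((A)ᵀ * P) y := by
  simp only [EuclideanSpace.inner_eq_star_dotProduct, qf, star_trivial]
  rw [← Matrix.mulVec_mulVec, Matrix.dotProduct_mulVec _ Aᵀ, Matrix.vecMul_transpose, dotProduct_comm]
  rfl

lemma qf_add (M N : Matrix (Fin n) (Fin n) ℝ) (y : EuclideanSpace ℝ (Fin n)) :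
    qf (M + N) y = qf M y + qf N y := by
  simp [qf, Matrix.add_mulVec, dotProduct_add]

lemma qf_smul (c : ℝ) (M : Matrix (Fin n) (Fin n) ℝ) (y : EuclideanSpace ℝ (Fin n)) :
    qf (c • M) y = c * qf M y := by
  simp [qf, Matrix.smul_mulVec, dotProduct_smul]

lemma qf_sub (M N : Matrix (Fin n) (Fin n) ℝ) (y : EuclideanSpace ℝ (Fin n)) :
    qf (M - N) y = qf M y - qf N y := by
  simp [qf, Matrix.sub_mulVec, dotProduct_sub]

lemma qf_neg (M : Matrix (Fin n) (Fin n) ℝ) (y : EuclideanSpace ℝ (Fin n)) :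
    qf (-M) y = - qf M y := by
  simp [qf, Matrix.neg_mulVec]

lemma qf_smul_vec (M : Matrix (Fin n) (Fin n) ℝ) (c : ℝ) (y : EuclideanSpace ℝ (Fin n)) :
    qf M (c • y) = c ^ 2 * qf M y := by
  simp [qf, Matrix.mulVec_smul, dotProduct_smul, smul_dotProduct]
  ring

lemma qf_pos {M : Matrix (Fin n) (Fin n) ℝ} (h : M.PosDef)
    {x : EuclideanSpace ℝ (Fin n)} (hx : x ≠ 0) : 0 < qf M x := by
  have hx' : (WithLp.equiv 2 (Fin n → ℝ)) x ≠ 0 := by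
    simpa using (WithLp.equiv 2 (Fin n → ℝ)).injective.ne hx
  simpa [qf] using h.dotProduct_mulVec_pos hx'

lemma qf_continuous (M : Matrix (Fin n) (Fin n) ℝ) :
    Continuous (fun x : EuclideanSpace ℝ (Fin n) => qf M x) := by
  have hL : Continuous (fun x : EuclideanSpace ℝ (Fin n) => Matrix.toEuclideanLin M x) :=
    (Matrix.toEuclideanLin M).continuous_of_finiteDimensional
  have : Continuous (fun x : EuclideanSpace ℝ (Fin n) =>
      (inner ℝ x (Matrix.toEuclideanLin M x) : ℝ)) := continuous_id.inner hL
  simpa only [inner_qf] using this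

lemma posdef_bounds (P : Matrix (Fin n) (Fin n) ℝ) (hP : P.PosDef) :
    ∃ c₁ c₂ : ℝ, 0 < c₁ ∧ 0 ≤ c₂ ∧ ∀ x : EuclideanSpace ℝ (Fin n),
      c₁ * ‖x‖ ^ 2 ≤ qf P x ∧ qf P x ≤ c₂ * ‖x‖ ^ 2 := by
  set L := (Matrix.toEuclideanLin P).toContinuousLinearMap with hLdef
  have hupper : ∀ x : EuclideanSpace ℝ (Fin n), qf P x ≤ ‖L‖ * ‖x‖ ^ 2 := by
    intro x
    have h1 : (inner ℝ x (L x) : ℝ) ≤ ‖x‖ * ‖L x‖ := real_inner_le_norm _ _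
    have h2 : ‖L x‖ ≤ ‖L‖ * ‖x‖ := L.le_opNorm x
    have h3 : (inner ℝ x (L x) : ℝ) = qf P x := inner_qf P x
    nlinarith [norm_nonneg x, norm_nonneg (L x)]
  rcases Nat.eq_zero_or_pos n with hn | hn
  · refine ⟨1, ‖L‖, one_pos, norm_nonneg _, fun x => ?_⟩
    subst hn
    have hx : x = 0 := Subsingleton.elim _ _
    have h0 : qf P x = 0 := by rw [hx]; simp [qf]
    have hnx : ‖x‖ = (0 : ℝ) := by rw [hx, norm_zero]
    rw [h0, hnx]
    exact ⟨by nlinarith, by nlinarith [norm_nonneg L]⟩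
  · haveI : Nontrivial (EuclideanSpace ℝ (Fin n)) := by
      apply Module.nontrivial_of_finrank_pos (R := ℝ)
      rw [finrank_euclideanSpace_fin]; exact hn
    have hsph : (sphere (0 : EuclideanSpace ℝ (Fin n)) 1).Nonempty :=
      NormedSpace.sphere_nonempty.mpr zero_le_one
    obtain ⟨x₀, hx₀s, hx₀min⟩ := (isCompact_sphere (0 : EuclideanSpace ℝ (Fin n)) 1).exists_isMinOn
      hsph ((qf_continuous P).continuousOn)
    have hx₀ : x₀ ≠ 0 := by
      intro h; rw [mem_sphere_zero_iff_norm, h, norm_zero] at hx₀s; norm_num at hx₀s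
    refine ⟨qf P x₀, ‖L‖, qf_pos hP hx₀, norm_nonneg _, fun x => ⟨?_, hupper x⟩⟩
    rcases eq_or_ne x 0 with rfl | hx
    · simp [qf]
    · have hnx : 0 < ‖x‖ := norm_pos_iff.mpr hx
      have hu : (‖x‖⁻¹ • x) ∈ sphere (0 : EuclideanSpace ℝ (Fin n)) 1 := by
        rw [mem_sphere_zero_iff_norm, norm_smul, norm_inv, norm_norm]
        field_simp
      have hmin : qf P x₀ ≤ (‖x‖⁻¹) ^ 2 * qf P x := by
        simpa [qf_smul_vec] using hx₀min hu
      have := mul_le_mul_of_nonneg_left hmin (le_of_lt (by positivity : (0:ℝ) < ‖x‖ ^ 2))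
      calc qf P x₀ * ‖x‖ ^ 2 = ‖x‖ ^ 2 * qf P x₀ := by ring
        _ ≤ ‖x‖ ^ 2 * ((‖x‖⁻¹) ^ 2 * qf P x) := this
        _ = qf P x := by field_simp

/-- Grönwall-type decay estimate for the quadratic form along a trajectory with right
derivatives given by the linear vector field of `A`. -/
lemma gron (A P : Matrix (Fin n) (Fin n) ℝ) (K : ℝ)
    (hq : ∀ y : EuclideanSpace ℝ (Fin n), qf (P * A) y + qf (Aᵀ * P) y ≤ K * qf P y)
    (x : ℝ → EuclideanSpace ℝ (Fin n)) (a b : ℝ) (hab : a ≤ b)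
    (hc : ContinuousOn x (Set.Icc a b))
    (hd : ∀ u ∈ Set.Ico a b, HasDerivWithinAt x (Matrix.toEuclideanLin A (x u)) (Set.Ici u) u) :
    qf P (x b) ≤ qf P (x a) * Real.exp (K * (b - a)) := by
  set f : ℝ → ℝ := fun u => qf P (x u) with hfdef
  set g : ℝ → ℝ := fun u => qf (P * A) (x u) + qf (Aᵀ * P) (x u) with hgdef
  have hLc : Continuous (fun y : EuclideanSpace ℝ (Fin n) => Matrix.toEuclideanLin P y) :=
    (Matrix.toEuclideanLin P).continuous_of_finiteDimensional
  have hfc : ContinuousOn f (Set.Icc a b) := by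
    have : ContinuousOn (fun u => (inner ℝ (x u) (Matrix.toEuclideanLin P (x u)) : ℝ))
        (Set.Icc a b) := hc.inner (hLc.comp_continuousOn hc)
    simpa only [hfdef, inner_qf] using this
  have hder : ∀ u ∈ Set.Ico a b, HasDerivWithinAt f (g u) (Set.Ici u) u := by
    intro u hu
    have h1 := hd u hu
    have h2 : HasDerivWithinAt (fun t => Matrix.toEuclideanLin P (x t))
        (Matrix.toEuclideanLin P (Matrix.toEuclideanLin A (x u))) (Set.Ici u) u := by
      have := ((Matrix.toEuclideanLin P).toContinuousLinearMap.hasFDerivAt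
        (x := x u)).comp_hasDerivWithinAt u h1
      exact this
    have h3 := h1.inner ℝ h2
    have h4 : HasDerivWithinAt f
        ((inner ℝ (x u) (Matrix.toEuclideanLin P (Matrix.toEuclideanLin A (x u))) : ℝ)
          + (inner ℝ (Matrix.toEuclideanLin A (x u)) (Matrix.toEuclideanLin P (x u)) : ℝ))
        (Set.Ici u) u := by
      simpa only [hfdef, inner_qf] using h3
    rw [inner_qf_mul, inner_qf_transpose] at h4
    exact h4
  have hmain := le_gronwallBound_of_liminf_deriv_right_le (f' := g) (K := K) (ε := 0)
    (δ := f a) hfc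
    (fun u hu r hr => ((hder u hu).liminf_right_slope_le hr).mono
      (fun z hz => by simpa [slope_def_field, div_eq_inv_mul] using hz))
    (le_refl (f a))
    (fun u hu => by
      have := hq (x u)
      simp only [hgdef, hfdef]
      linarith)
  have hb := hmain b (Set.right_mem_Icc.mpr hab)
  rwa [gronwallBound_ε0] at hb

end QuadAux

end QuadAuxSection

/-- Quadratic sufficient condition of Hespanha–Morse type. -/
theorem quadratic_sufficient_tauUGEB {m n : ℕ} (A : Fin m → Matrix (Fin n) (Fin n) ℝ)
    (ρ α ν : ℝ) (hρ : 0 < ρ) (hα : 0 < α) (hν : 1 ≤ ν)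
    (P : Fin m → Matrix (Fin n) (Fin n) ℝ)
    (hP : ∀ i, (P i).PosDef)
    (hlmi : ∀ i, (-(P i * A i + (A i).transpose * P i + (2 * (α + ρ)) • P i)).PosDef)
    (hcmp : ∀ i j, (ν ^ 2 • P j - P i).PosSemidef) :
    ∀ τ : ℝ, Real.log ν / α ≤ τ → LinTauUGEB A τ ρ := by
  intro τ hτ
  rcases Nat.eq_zero_or_pos m with hm | hm
  · subst hm
    exact ⟨1, α, one_pos, hα.le, fun σ => (σ.toFun 0).elim0⟩
  haveI : Nonempty (Fin m) := ⟨⟨0, hm⟩⟩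
  have hν0 : (0:ℝ) < ν := lt_of_lt_of_le one_pos hν
  -- uniform quadratic bounds
  have hbounds := fun i => QuadAux.posdef_bounds (P i) (hP i)
  choose c₁ c₂ hc₁ hc₂ hb using hbounds
  set C1 : ℝ := Finset.univ.inf' Finset.univ_nonempty c₁ with hC1def
  set C2 : ℝ := Finset.univ.sup' Finset.univ_nonempty c₂ with hC2def
  have hC1 : 0 < C1 := (Finset.lt_inf'_iff _).mpr (fun i _ => hc₁ i)
  have hC1le : ∀ i, C1 ≤ c₁ i := fun i => Finset.inf'_le _ (Finset.mem_univ i)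
  have hC2le : ∀ i, c₂ i ≤ C2 := fun i => Finset.le_sup' _ (Finset.mem_univ i)
  set M : ℝ := Real.sqrt (max 1 (C2 / C1)) with hMdef
  have hmax0 : (0:ℝ) ≤ max 1 (C2 / C1) := le_trans zero_le_one (le_max_left _ _)
  have hM : 0 < M := Real.sqrt_pos.mpr (lt_of_lt_of_le one_pos (le_max_left _ _))
  refine ⟨M, α, hM, hα.le, ?_⟩
  intro σ x hx t ht
  set K : ℝ := -(2 * (α + ρ)) with hKdef
  -- the LMI in quadratic-form language
  have hqK : ∀ i, ∀ y : EuclideanSpace ℝ (Fin n),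
      QuadAux.qf (P i * A i) y + QuadAux.qf ((A i).transpose * P i) y ≤ K * QuadAux.qf (P i) y := by
    intro i y
    have h0 := QuadAux.qf_nonneg (hlmi i).posSemidef y
    rw [QuadAux.qf_neg] at h0
    rw [QuadAux.qf_add, QuadAux.qf_add, QuadAux.qf_smul] at h0
    simp only [hKdef]
    linarith
  -- the comparison condition in quadratic-form language
  have hcmpq : ∀ i j, ∀ y : EuclideanSpace ℝ (Fin n),
      QuadAux.qf (P i) y ≤ ν ^ 2 * QuadAux.qf (P j) y := by
    intro i j y
    have h0 := QuadAux.qf_nonneg (hcmp i j) y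
    rw [QuadAux.qf_sub, QuadAux.qf_smul] at h0
    linarith
  -- Grönwall on an interval where the signal is constant
  have gronB : ∀ (i : Fin m) (a b : ℝ), 0 ≤ a → a ≤ b →
      (∀ u, a ≤ u → u < b → σ.toFun u = i) →
      QuadAux.qf (P i) (x b) ≤ QuadAux.qf (P i) (x a) * Real.exp (K * (b - a)) := by
    intro i a b ha hab hσ
    refine QuadAux.gron (A i) (P i) K (hqK i) x a b hab
      (hx.1.mono (fun u hu => le_trans ha hu.1)) ?_
    intro u hu
    have hder := hx.2 u (le_trans ha hu.1)
    rwa [hσ u hu.1 hu.2] at hder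
  -- key inductive estimate
  have key : ∀ k : ℕ, ∀ t' : ℝ, 0 ≤ t' → (σ.instants ∩ Set.Ioc 0 t').ncard = k →
      QuadAux.qf (P (σ.toFun t')) (x t') ≤
        ν ^ (2 * k) * Real.exp (K * t') * QuadAux.qf (P (σ.toFun 0)) (x 0) := by
    intro k
    induction k with
    | zero =>
      intro t' ht' hcard
      have hfin : (σ.instants ∩ Set.Ioc 0 t').Finite :=
        (σ.finite_le t').subset (fun u hu => ⟨hu.1, hu.2.2⟩)
      have hempty : σ.instants ∩ Set.Ioc 0 t' = ∅ := (Set.ncard_eq_zero hfin).mp hcard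
      have hσ0 : ∀ u, 0 ≤ u → u ≤ t' → σ.toFun u = σ.toFun 0 := by
        intro u hu hut
        refine (σ.const_between 0 u le_rfl hu ?_).symm
        have hsub : σ.instants ∩ Set.Ioc 0 u ⊆ σ.instants ∩ Set.Ioc 0 t' :=
          Set.inter_subset_inter_right _ (Set.Ioc_subset_Ioc_right hut)
        rw [hempty] at hsub
        exact Set.subset_empty_iff.mp hsub
      have hG := gronB (σ.toFun 0) 0 t' le_rfl ht' (fun u hu hut => hσ0 u hu hut.le)
      rw [hσ0 t' ht' le_rfl, Nat.mul_zero, pow_zero, one_mul, mul_comm]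
      simpa using hG
    | succ k ih =>
      intro t' ht' hcard
      have hfinT : (σ.instants ∩ Set.Ioc 0 t').Finite :=
        (σ.finite_le t').subset (fun u hu => ⟨hu.1, hu.2.2⟩)
      have hne : (σ.instants ∩ Set.Ioc 0 t').Nonempty :=
        Set.nonempty_of_ncard_ne_zero (by rw [hcard]; exact Nat.succ_ne_zero k)
      obtain ⟨s, hsmem, hsmax0⟩ := Set.Finite.exists_maximalFor id _ hfinT hne
      have hsmax : ∀ b ∈ σ.instants ∩ Set.Ioc 0 t', b ≤ s := by
        intro b hb
        rcases le_total b s with h | h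
        · exact h
        · exact hsmax0 hb h
      have hsI : s ∈ σ.instants := hsmem.1
      have hs0 : 0 < s := hsmem.2.1
      have hst : s ≤ t' := hsmem.2.2
      have hF1 : σ.instants ∩ Set.Ioc s t' = ∅ := by
        ext u
        simp only [Set.mem_inter_iff, Set.mem_Ioc, Set.mem_empty_iff_false, iff_false, not_and]
        intro huI hsu hut
        exact absurd (hsmax u ⟨huI, lt_trans hs0 hsu, hut⟩) (not_le.mpr hsu)
      have hσst : ∀ u, s ≤ u → u ≤ t' → σ.toFun u = σ.toFun s := by
        intro u hsu hut
        refine (σ.const_between s u hs0.le hsu ?_).symm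
        have hsub : σ.instants ∩ Set.Ioc s u ⊆ σ.instants ∩ Set.Ioc s t' :=
          Set.inter_subset_inter_right _ (Set.Ioc_subset_Ioc_right hut)
        rw [hF1] at hsub
        exact Set.subset_empty_iff.mp hsub
      -- the previous switching instant
      have hfinS' : (σ.instants ∩ Set.Ico 0 s).Finite :=
        (σ.finite_le s).subset (fun u hu => ⟨hu.1, hu.2.2.le⟩)
      have hneS' : (σ.instants ∩ Set.Ico 0 s).Nonempty := ⟨0, σ.zero_mem, le_rfl, hs0⟩
      obtain ⟨s', hs'mem, hs'max0⟩ := Set.Finite.exists_maximalFor id _ hfinS' hneS'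
      have hs'max : ∀ b ∈ σ.instants ∩ Set.Ico 0 s, b ≤ s' := by
        intro b hb
        rcases le_total b s' with h | h
        · exact h
        · exact hs'max0 hb h
      have hs'I : s' ∈ σ.instants := hs'mem.1
      have hs'0 : 0 ≤ s' := hs'mem.2.1
      have hs's : s' < s := hs'mem.2.2
      have hσs' : ∀ u, s' ≤ u → u < s → σ.toFun u = σ.toFun s' := by
        intro u h1 h2
        refine (σ.const_between s' u hs'0 h1 ?_).symm
        have hsub : σ.instants ∩ Set.Ioc s' u ⊆ σ.instants ∩ Set.Ico 0 s := by
          rintro v ⟨hvI, hv1, hv2⟩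
          exact ⟨hvI, σ.nonneg v hvI, lt_of_le_of_lt hv2 h2⟩
        by_contra hnonempty
        obtain ⟨v, hv⟩ := Set.nonempty_iff_ne_empty.mpr hnonempty
        have hvle := hs'max v (hsub hv)
        exact absurd hvle (not_le.mpr hv.2.1)
      -- instants in (s', t'] reduce to {s}
      have hsingle : σ.instants ∩ Set.Ioc s' t' = {s} := by
        ext u
        simp only [Set.mem_inter_iff, Set.mem_Ioc, Set.mem_singleton_iff]
        constructor
        · rintro ⟨huI, h1, h2⟩
          by_contra hne'
          rcases lt_or_gt_of_ne hne' with hlt | hgt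
          · exact absurd (hs'max u ⟨huI, σ.nonneg u huI, hlt⟩) (not_le.mpr h1)
          · exact absurd (hsmax u ⟨huI, lt_trans hs0 hgt, h2⟩) (not_le.mpr hgt)
        · rintro rfl
          exact ⟨hsI, hs's, hst⟩
      have hdisj : Disjoint (σ.instants ∩ Set.Ioc 0 s') (σ.instants ∩ Set.Ioc s' t') := by
        apply Set.disjoint_left.mpr
        rintro u ⟨_, _, h2⟩ ⟨_, h3, _⟩
        exact absurd h3 (not_lt.mpr h2)
      have hunion : σ.instants ∩ Set.Ioc 0 t'
          = (σ.instants ∩ Set.Ioc 0 s') ∪ (σ.instants ∩ Set.Ioc s' t') := by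
        rw [← Set.inter_union_distrib_left,
          Set.Ioc_union_Ioc_eq_Ioc hs'0 (le_trans hs's.le hst)]
      have hfinA : (σ.instants ∩ Set.Ioc 0 s').Finite :=
        (σ.finite_le s').subset (fun u hu => ⟨hu.1, hu.2.2⟩)
      have hfinB : (σ.instants ∩ Set.Ioc s' t').Finite :=
        (σ.finite_le t').subset (fun u hu => ⟨hu.1, hu.2.2⟩)
      have hcard' : (σ.instants ∩ Set.Ioc 0 s').ncard = k := by
        have hsum := Set.ncard_union_eq hdisj hfinA hfinB
        rw [← hunion, hcard, hsingle, Set.ncard_singleton] at hsum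
        omega
      -- Grönwall steps
      have hG1 : QuadAux.qf (P (σ.toFun s)) (x t')
          ≤ QuadAux.qf (P (σ.toFun s)) (x s) * Real.exp (K * (t' - s)) :=
        gronB (σ.toFun s) s t' hs0.le hst (fun u h1 h2 => hσst u h1 h2.le)
      have hG2 : QuadAux.qf (P (σ.toFun s')) (x s)
          ≤ QuadAux.qf (P (σ.toFun s')) (x s') * Real.exp (K * (s - s')) :=
        gronB (σ.toFun s') s' s hs'0 hs's.le hσs'
      have hG3 : QuadAux.qf (P (σ.toFun s)) (x s)
          ≤ ν ^ 2 * QuadAux.qf (P (σ.toFun s')) (x s) := hcmpq _ _ _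
      have hG4 := ih s' hs'0 hcard'
      -- nonnegativity facts
      have he1 : (0:ℝ) < Real.exp (K * (t' - s)) := Real.exp_pos _
      have he2 : (0:ℝ) < Real.exp (K * (s - s')) := Real.exp_pos _
      have hν2 : (0:ℝ) ≤ ν ^ 2 := by positivity
      have hσt'i : σ.toFun t' = σ.toFun s := hσst t' hst le_rfl
      rw [hσt'i]
      have hpow : ν ^ (2 * (k + 1)) = ν ^ (2 * k) * ν ^ 2 := by
        rw [show 2 * (k + 1) = 2 * k + 2 from by ring, pow_add]
      calc QuadAux.qf (P (σ.toFun s)) (x t')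
          ≤ QuadAux.qf (P (σ.toFun s)) (x s) * Real.exp (K * (t' - s)) := hG1
        _ ≤ (ν ^ 2 * QuadAux.qf (P (σ.toFun s')) (x s)) * Real.exp (K * (t' - s)) :=
            mul_le_mul_of_nonneg_right hG3 he1.le
        _ ≤ (ν ^ 2 * (QuadAux.qf (P (σ.toFun s')) (x s') * Real.exp (K * (s - s'))))
              * Real.exp (K * (t' - s)) :=
            mul_le_mul_of_nonneg_right (mul_le_mul_of_nonneg_left hG2 hν2) he1.le
        _ ≤ (ν ^ 2 * ((ν ^ (2 * k) * Real.exp (K * s') * QuadAux.qf (P (σ.toFun 0)) (x 0))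
              * Real.exp (K * (s - s')))) * Real.exp (K * (t' - s)) :=
            mul_le_mul_of_nonneg_right (mul_le_mul_of_nonneg_left
              (mul_le_mul_of_nonneg_right hG4 he2.le) hν2) he1.le
        _ = ν ^ (2 * (k + 1)) * Real.exp (K * t') * QuadAux.qf (P (σ.toFun 0)) (x 0) := by
            rw [hpow]
            have hexp : Real.exp (K * s') * Real.exp (K * (s - s')) * Real.exp (K * (t' - s))
                = Real.exp (K * t') := by
              rw [← Real.exp_add, ← Real.exp_add]
              congr 1
              ring
            rw [← hexp]
            ring
  -- conclusion
  set k := (σ.instants ∩ Set.Ioc 0 t).ncard with hkdef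
  have hkey := key k t ht rfl
  set N : ℕ := Nsw σ 0 t with hNdef
  have hkN : k ≤ N := by
    rcases eq_or_lt_of_le ht with rfl | ht0
    · have : σ.instants ∩ Set.Ioc 0 0 = ∅ := by simp
      rw [hkdef, this, Set.ncard_empty]
      exact Nat.zero_le _
    · have hfinI0 : (σ.instants ∩ Set.Ioo 0 t).Finite :=
        (σ.finite_le t).subset (fun u hu => ⟨hu.1, hu.2.2.le⟩)
      have h1 : σ.instants ∩ Set.Ioc 0 t ⊆ insert t (σ.instants ∩ Set.Ioo 0 t) := by
        rintro u ⟨huI, h0u, hut⟩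
        rcases eq_or_lt_of_le hut with rfl | h
        · exact Set.mem_insert _ _
        · exact Set.mem_insert_of_mem _ ⟨huI, h0u, h⟩
      have h2 : insert (0:ℝ) (σ.instants ∩ Set.Ioo 0 t) ⊆ σ.instants ∩ Set.Ico 0 t := by
        rintro u hu
        rcases hu with rfl | hu
        · exact ⟨σ.zero_mem, le_rfl, ht0⟩
        · exact ⟨hu.1, hu.2.1.le, hu.2.2⟩
      have hL1 : k ≤ (σ.instants ∩ Set.Ioo 0 t).ncard + 1 :=
        le_trans (Set.ncard_le_ncard h1 (hfinI0.insert t)) (Set.ncard_insert_le t _)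
      have h0notin : (0:ℝ) ∉ σ.instants ∩ Set.Ioo 0 t := fun h => lt_irrefl 0 h.2.1
      have hL2 : (insert (0:ℝ) (σ.instants ∩ Set.Ioo 0 t)).ncard
          = (σ.instants ∩ Set.Ioo 0 t).ncard + 1 :=
        Set.ncard_insert_of_notMem h0notin hfinI0
      have hL3 : (insert (0:ℝ) (σ.instants ∩ Set.Ioo 0 t)).ncard ≤ N :=
        Set.ncard_le_ncard h2 ((σ.finite_le t).subset (fun u hu => ⟨hu.1, hu.2.2.le⟩))
      omega
  -- from ν to exponential
  have hν1 : ν ≤ Real.exp (α * τ) := by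
    have hlog : Real.log ν ≤ α * τ := by
      rw [div_le_iff₀ hα] at hτ
      linarith [mul_comm τ α]
    calc ν = Real.exp (Real.log ν) := (Real.exp_log hν0).symm
      _ ≤ Real.exp (α * τ) := Real.exp_le_exp.mpr hlog
  have hατ : 0 ≤ α * τ := by
    have hlogν : 0 ≤ Real.log ν := Real.log_nonneg hν
    have hτ0 : 0 ≤ τ := le_trans (div_nonneg hlogν hα.le) hτ
    exact mul_nonneg hα.le hτ0
  have hνk : ν ^ k ≤ Real.exp (α * τ * (N : ℝ)) := by
    calc ν ^ k ≤ Real.exp (α * τ) ^ k := pow_le_pow_left₀ hν0.le hν1 k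
      _ = Real.exp ((k : ℝ) * (α * τ)) := (Real.exp_nat_mul _ k).symm
      _ ≤ Real.exp (α * τ * (N : ℝ)) := by
          apply Real.exp_le_exp.mpr
          have hcast : (k : ℝ) ≤ (N : ℝ) := Nat.cast_le.mpr hkN
          nlinarith
  -- squares comparison
  have hA1 : C1 * ‖x t‖ ^ 2 ≤ QuadAux.qf (P (σ.toFun t)) (x t) :=
    le_trans (mul_le_mul_of_nonneg_right (hC1le _) (sq_nonneg _)) (hb (σ.toFun t) (x t)).1
  have hA2 : QuadAux.qf (P (σ.toFun 0)) (x 0) ≤ C2 * ‖x 0‖ ^ 2 :=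
    le_trans (hb _ _).2 (mul_le_mul_of_nonneg_right (hC2le _) (sq_nonneg _))
  have hC2nn : (0:ℝ) ≤ C2 := le_trans (hc₂ (Classical.arbitrary _)) (hC2le _)
  have hE : (0:ℝ) ≤ ν ^ (2 * k) * Real.exp (K * t) :=
    mul_nonneg (pow_nonneg hν0.le _) (Real.exp_pos _).le
  have hA3 : C1 * ‖x t‖ ^ 2
      ≤ (ν ^ (2 * k) * Real.exp (K * t)) * (C2 * ‖x 0‖ ^ 2) :=
    le_trans hA1 (le_trans hkey (mul_le_mul_of_nonneg_left hA2 hE))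
  have hν2k : ν ^ (2 * k) ≤ Real.exp (α * τ * (N : ℝ)) ^ 2 := by
    rw [show 2 * k = k * 2 from by ring, pow_mul]
    exact pow_le_pow_left₀ (pow_nonneg hν0.le k) hνk 2
  have hexp2 : Real.exp (-(ρ + α) * t) ^ 2 = Real.exp (K * t) := by
    rw [sq, ← Real.exp_add]
    congr 1
    rw [hKdef]
    ring
  have hM2 : C2 ≤ M ^ 2 * C1 := by
    have : C2 / C1 ≤ M ^ 2 := by
      rw [hMdef, Real.sq_sqrt hmax0]
      exact le_max_right _ _
    calc C2 = (C2 / C1) * C1 := by field_simp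
      _ ≤ M ^ 2 * C1 := mul_le_mul_of_nonneg_right this hC1.le
  set R : ℝ := M * Real.exp (α * τ * (N : ℝ)) * Real.exp (-(ρ + α) * t) * ‖x 0‖ with hRdef
  have hR0 : 0 ≤ R := by
    rw [hRdef]
    exact mul_nonneg (mul_nonneg (mul_nonneg hM.le (Real.exp_pos _).le) (Real.exp_pos _).le)
      (norm_nonneg _)
  have hfin2 : C1 * ‖x t‖ ^ 2 ≤ C1 * R ^ 2 := by
    have hEle : ν ^ (2 * k) * Real.exp (K * t)
        ≤ Real.exp (α * τ * (N : ℝ)) ^ 2 * Real.exp (K * t) :=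
      mul_le_mul_of_nonneg_right hν2k (Real.exp_pos _).le
    have step1 : C1 * ‖x t‖ ^ 2
        ≤ (Real.exp (α * τ * (N : ℝ)) ^ 2 * Real.exp (K * t)) * (C2 * ‖x 0‖ ^ 2) := by
      refine le_trans hA3 (mul_le_mul_of_nonneg_right hEle ?_)
      exact mul_nonneg hC2nn (sq_nonneg _)
    have step2 : (Real.exp (α * τ * (N : ℝ)) ^ 2 * Real.exp (K * t)) * (C2 * ‖x 0‖ ^ 2)
        ≤ (Real.exp (α * τ * (N : ℝ)) ^ 2 * Real.exp (K * t)) * ((M ^ 2 * C1) * ‖x 0‖ ^ 2) := by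
      refine mul_le_mul_of_nonneg_left (mul_le_mul_of_nonneg_right hM2 (sq_nonneg _)) ?_
      positivity
    have heq : (Real.exp (α * τ * (N : ℝ)) ^ 2 * Real.exp (K * t)) * ((M ^ 2 * C1) * ‖x 0‖ ^ 2)
        = C1 * R ^ 2 := by
      rw [hRdef, mul_pow, mul_pow, mul_pow, hexp2]
      ring
    rw [← heq]
    exact le_trans step1 step2
  have hxtR : ‖x t‖ ^ 2 ≤ R ^ 2 := le_of_mul_le_mul_left hfin2 hC1
  calc ‖x t‖ = Real.sqrt (‖x t‖ ^ 2) := (Real.sqrt_sq (norm_nonneg _)).symm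
    _ ≤ Real.sqrt (R ^ 2) := Real.sqrt_le_sqrt hxtR
    _ = R := Real.sqrt_sq hR0
end
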